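/- arXiv:2501.01523 — 5 statements merged into one kernel-verified Lean document; each statement's English description precedes it below -/
import Mathlib

section
/- Let R₀ > r₀ > 0, let D = (r₀, R₁) × ℝ × (Z_a, Z_b) be an open box in (R, φ, Z)-coordinates with base point (R₀, Z₀) satisfying r₀ < R₀ < R₁ and Z_a < Z₀ < Z_b, and let B_R, B_φ, B_Z : D → ℝ be C¹ functions satisfying the cylindrical divergence-free identity ∂(R·B_R)/∂R + ∂B_φ/∂φ + R·∂B_Z/∂Z = 0 on D. Define ψ(R, φ, Z) = −∫_{Z₀}^{Z} R·B_R(R, φ, Z′) dZ′ + ∫_{R₀}^{R} R′·B_Z(R′, φ, Z₀) dR′ and χ(R, φ, Z) = ∫_{Z₀}^{Z} R·B_φ(R, φ, Z′) dZ′. Then for every (R, φ, Z) ∈ D one has B_R(R, φ, Z) = −(1/R)·∂ψ/∂Z, B_φ(R, φ, Z) = (1/R)·∂χ/∂Z, and B_Z(R, φ, Z) = (1/R)·∂ψ/∂R − (1/R²)·∂χ/∂φ. -/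
open MeasureTheory intervalIntegral Set Metric

/-- Derivative of a C¹ function along a differentiable curve inside an open set. -/
lemma aux_hasDerivAt_comp_line {F : ℝ × ℝ × ℝ → ℝ} {D : Set (ℝ × ℝ × ℝ)}
    (hO : IsOpen D) (hF : ContDiffOn ℝ 1 F D)
    {p : ℝ × ℝ × ℝ} (hp : p ∈ D) {c : ℝ → ℝ × ℝ × ℝ} {v : ℝ × ℝ × ℝ} {t : ℝ}
    (hc : HasDerivAt c v t) (hct : c t = p) :
    HasDerivAt (fun s => F (c s)) (fderiv ℝ F p v) t := by
  have hd : DifferentiableAt ℝ F p :=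
    (hF.differentiableOn one_ne_zero).differentiableAt (hO.mem_nhds hp)
  have h1 : HasFDerivAt F (fderiv ℝ F p) (c t) := by rw [hct]; exact hd.hasFDerivAt
  exact h1.comp_hasDerivAt t hc

lemma aux_contOn_fderiv_apply {F : ℝ × ℝ × ℝ → ℝ} {D : Set (ℝ × ℝ × ℝ)}
    (hO : IsOpen D) (hF : ContDiffOn ℝ 1 F D) (v : ℝ × ℝ × ℝ) :
    ContinuousOn (fun p => fderiv ℝ F p v) D :=
  (ContinuousLinearMap.apply ℝ ℝ v).continuous.comp_continuousOn
    (hF.continuousOn_fderiv_of_isOpen hO le_rfl)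

/-- Vector potential reconstruction recovers the divergence-free field.
For a C¹ field (B_R, B_φ, B_Z) on an open box D = (r₀, R₁) × ℝ × (Z_a, Z_b) (with
0 < r₀ < R₀ < R₁ and Z_a < Z₀ < Z_b) satisfying the cylindrical divergence-free
identity, the potentials ψ, χ defined by the line-integral formulas satisfy
B_R = −(1/R)∂ψ/∂Z, B_φ = (1/R)∂χ/∂Z, B_Z = (1/R)∂ψ/∂R − (1/R²)∂χ/∂φ on D. -/
theorem vector_potential_reconstruction_recovers_field
    (r₀ R₀ R₁ Za Zb Z₀ : ℝ)
    (hr₀ : 0 < r₀) (hR₀ : r₀ < R₀) (hR₁ : R₀ < R₁)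
    (hZa : Za < Z₀) (hZb : Z₀ < Zb)
    (D : Set (ℝ × ℝ × ℝ))
    (hD : D = Set.Ioo r₀ R₁ ×ˢ (Set.univ : Set ℝ) ×ˢ Set.Ioo Za Zb)
    (BR Bφ BZ : ℝ → ℝ → ℝ → ℝ)
    (hBR : ContDiffOn ℝ 1 (fun p : ℝ × ℝ × ℝ => BR p.1 p.2.1 p.2.2) D)
    (hBφ : ContDiffOn ℝ 1 (fun p : ℝ × ℝ × ℝ => Bφ p.1 p.2.1 p.2.2) D)
    (hBZ : ContDiffOn ℝ 1 (fun p : ℝ × ℝ × ℝ => BZ p.1 p.2.1 p.2.2) D)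
    (hdiv : ∀ R φ Z : ℝ, (R, φ, Z) ∈ D →
      deriv (fun R' => R' * BR R' φ Z) R
        + deriv (fun φ' => Bφ R φ' Z) φ
        + R * deriv (fun Z' => BZ R φ Z') Z = 0)
    (ψ χ : ℝ → ℝ → ℝ → ℝ)
    (hψ : ∀ R φ Z : ℝ, ψ R φ Z
      = -(∫ z' in Z₀..Z, R * BR R φ z') + ∫ r' in R₀..R, r' * BZ r' φ Z₀)
    (hχ : ∀ R φ Z : ℝ, χ R φ Z = ∫ z' in Z₀..Z, R * Bφ R φ z') :
    ∀ R φ Z : ℝ, (R, φ, Z) ∈ D →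
      BR R φ Z = -(1 / R) * deriv (fun Z' => ψ R φ Z') Z ∧
      Bφ R φ Z = (1 / R) * deriv (fun Z' => χ R φ Z') Z ∧
      BZ R φ Z = (1 / R) * deriv (fun R' => ψ R' φ Z) R
        - (1 / R ^ 2) * deriv (fun φ' => χ R φ' Z) φ := by
  subst hD
  set D : Set (ℝ × ℝ × ℝ) := Set.Ioo r₀ R₁ ×ˢ (Set.univ : Set ℝ) ×ˢ Set.Ioo Za Zb with hDdef
  have hO : IsOpen D := isOpen_Ioo.prod (isOpen_univ.prod isOpen_Ioo)
  intro R φ Z hmem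
  have hRmem : R ∈ Set.Ioo r₀ R₁ := hmem.1
  have hZmem : Z ∈ Set.Ioo Za Zb := hmem.2.2
  have hRpos : 0 < R := lt_trans hr₀ hRmem.1
  have hRne : R ≠ 0 := ne_of_gt hRpos
  have hZ₀mem : Z₀ ∈ Set.Ioo Za Zb := ⟨hZa, hZb⟩
  have hR₀mem : R₀ ∈ Set.Ioo r₀ R₁ := ⟨hR₀, hR₁⟩
  have huIcc : Set.uIcc Z₀ Z ⊆ Set.Ioo Za Zb :=
    Set.ordConnected_Ioo.uIcc_subset hZ₀mem hZmem
  have huIccR : Set.uIcc R₀ R ⊆ Set.Ioo r₀ R₁ :=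
    Set.ordConnected_Ioo.uIcc_subset hR₀mem hRmem
  have hmemD : ∀ {r ph z : ℝ}, r ∈ Set.Ioo r₀ R₁ → z ∈ Set.Ioo Za Zb → (r, ph, z) ∈ D :=
    fun hr hz => ⟨hr, trivial, hz⟩
  -- generic slice continuity lemmas
  have sliceZ : ∀ (G : ℝ × ℝ × ℝ → ℝ), ContinuousOn G D → ∀ r ph : ℝ, r ∈ Set.Ioo r₀ R₁ →
      ContinuousOn (fun z => G (r, ph, z)) (Set.Ioo Za Zb) := by
    intro G hG r ph hr
    exact hG.comp ((continuous_const.prodMk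
      (continuous_const.prodMk continuous_id)).continuousOn)
      (fun z hz => hmemD hr hz)
  have sliceR : ∀ (G : ℝ × ℝ × ℝ → ℝ), ContinuousOn G D → ∀ ph z : ℝ, z ∈ Set.Ioo Za Zb →
      ContinuousOn (fun r => G (r, ph, z)) (Set.Ioo r₀ R₁) := by
    intro G hG ph z hz
    exact hG.comp ((continuous_id.prodMk
      (continuous_const.prodMk continuous_const)).continuousOn)
      (fun r hr => hmemD hr hz)
  have intZ : ∀ (G : ℝ × ℝ × ℝ → ℝ), ContinuousOn G D → ∀ r ph : ℝ, r ∈ Set.Ioo r₀ R₁ →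
      IntervalIntegrable (fun z => G (r, ph, z)) volume Z₀ Z :=
    fun G hG r ph hr => ((sliceZ G hG r ph hr).mono huIcc).intervalIntegrable
  have contAtZ : ∀ (G : ℝ × ℝ × ℝ → ℝ), ContinuousOn G D → ∀ {r ph z : ℝ}, (r, ph, z) ∈ D →
      ContinuousAt (fun z' => G (r, ph, z')) z := by
    intro G hG r ph z hp
    have h1 : ContinuousAt G (r, ph, z) := hG.continuousAt (hO.mem_nhds hp)
    have h2 : ContinuousAt (fun z' : ℝ => ((r, ph, z') : ℝ × ℝ × ℝ)) z :=
      (continuous_const.prodMk (continuous_const.prodMk continuous_id)).continuousAt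
    exact ContinuousAt.comp (f := fun z' : ℝ => ((r, ph, z') : ℝ × ℝ × ℝ)) (g := G) h1 h2
  -- continuity of the fields
  have hcBR : ContinuousOn (fun p : ℝ × ℝ × ℝ => BR p.1 p.2.1 p.2.2) D := hBR.continuousOn
  have hcBφ : ContinuousOn (fun p : ℝ × ℝ × ℝ => Bφ p.1 p.2.1 p.2.2) D := hBφ.continuousOn
  have hcBZ : ContinuousOn (fun p : ℝ × ℝ × ℝ => BZ p.1 p.2.1 p.2.2) D := hBZ.continuousOn
  -- partial derivative functions
  set dBR1 : ℝ × ℝ × ℝ → ℝ :=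
    fun p => fderiv ℝ (fun q : ℝ × ℝ × ℝ => BR q.1 q.2.1 q.2.2) p (1, 0, 0) with hdBR1def
  set dBφ2 : ℝ × ℝ × ℝ → ℝ :=
    fun p => fderiv ℝ (fun q : ℝ × ℝ × ℝ => Bφ q.1 q.2.1 q.2.2) p (0, 1, 0) with hdBφ2def
  set dBZ3 : ℝ × ℝ × ℝ → ℝ :=
    fun p => fderiv ℝ (fun q : ℝ × ℝ × ℝ => BZ q.1 q.2.1 q.2.2) p (0, 0, 1) with hdBZ3def
  have hcdBR1 : ContinuousOn dBR1 D := aux_contOn_fderiv_apply hO hBR _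
  have hcdBφ2 : ContinuousOn dBφ2 D := aux_contOn_fderiv_apply hO hBφ _
  have hcdBZ3 : ContinuousOn dBZ3 D := aux_contOn_fderiv_apply hO hBZ _
  -- partial derivatives as HasDerivAt
  have hpartR : ∀ {r ph z : ℝ}, (r, ph, z) ∈ D →
      HasDerivAt (fun r' => BR r' ph z) (dBR1 (r, ph, z)) r := by
    intro r ph z hp
    exact aux_hasDerivAt_comp_line hO hBR hp
      ((hasDerivAt_id r).prodMk ((hasDerivAt_const r ph).prodMk (hasDerivAt_const r z))) rfl
  have hpartφ : ∀ {r ph z : ℝ}, (r, ph, z) ∈ D →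
      HasDerivAt (fun ph' => Bφ r ph' z) (dBφ2 (r, ph, z)) ph := by
    intro r ph z hp
    exact aux_hasDerivAt_comp_line hO hBφ hp
      ((hasDerivAt_const ph r).prodMk ((hasDerivAt_id ph).prodMk (hasDerivAt_const ph z))) rfl
  have hpartZ : ∀ {r ph z : ℝ}, (r, ph, z) ∈ D →
      HasDerivAt (fun z' => BZ r ph z') (dBZ3 (r, ph, z)) z := by
    intro r ph z hp
    exact aux_hasDerivAt_comp_line hO hBZ hp
      ((hasDerivAt_const z r).prodMk ((hasDerivAt_const z ph).prodMk (hasDerivAt_id z))) rfl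
  have hg : ∀ {r ph z : ℝ}, (r, ph, z) ∈ D →
      HasDerivAt (fun r' => r' * BR r' ph z) (1 * BR r ph z + r * dBR1 (r, ph, z)) r :=
    fun hp => (hasDerivAt_id _).mul (hpartR hp)
  -- divergence identity in terms of partials
  have hdiv' : ∀ {z : ℝ}, z ∈ Set.Ioo Za Zb →
      1 * BR R φ z + R * dBR1 (R, φ, z) = -(dBφ2 (R, φ, z) + R * dBZ3 (R, φ, z)) := by
    intro z hz
    have hp : (R, φ, z) ∈ D := hmemD hRmem hz
    have h := hdiv R φ z hp
    rw [(hg hp).deriv, (hpartφ hp).deriv, (hpartZ hp).deriv] at h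
    linarith
  -- Part 1 : Z-derivative of ψ
  have hint1 : IntervalIntegrable (fun z' => R * BR R φ z') volume Z₀ Z :=
    intZ (fun p => p.1 * BR p.1 p.2.1 p.2.2) (continuous_fst.continuousOn.mul hcBR) R φ hRmem
  have hFTC1 : HasDerivAt (fun Z' => ∫ z' in Z₀..Z', R * BR R φ z') (R * BR R φ Z) Z := by
    apply intervalIntegral.integral_hasDerivAt_right hint1
    · exact (ContinuousOn.stronglyMeasurableAtFilter isOpen_Ioo
        (sliceZ (fun p => p.1 * BR p.1 p.2.1 p.2.2)
          (continuous_fst.continuousOn.mul hcBR) R φ hRmem)) Z hZmem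
    · exact contAtZ (fun p => p.1 * BR p.1 p.2.1 p.2.2)
        (continuous_fst.continuousOn.mul hcBR) hmem
  have hψZ : HasDerivAt (fun Z' => ψ R φ Z') (-(R * BR R φ Z)) Z := by
    have heq : (fun Z' => ψ R φ Z')
        = fun Z' => -(∫ z' in Z₀..Z', R * BR R φ z') + ∫ r' in R₀..R, r' * BZ r' φ Z₀ :=
      funext fun Z' => hψ R φ Z'
    rw [heq]
    exact hFTC1.neg.add_const _
  -- Part 2 : Z-derivative of χ
  have hint2 : IntervalIntegrable (fun z' => R * Bφ R φ z') volume Z₀ Z :=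
    intZ (fun p => p.1 * Bφ p.1 p.2.1 p.2.2) (continuous_fst.continuousOn.mul hcBφ) R φ hRmem
  have hFTC2 : HasDerivAt (fun Z' => ∫ z' in Z₀..Z', R * Bφ R φ z') (R * Bφ R φ Z) Z := by
    apply intervalIntegral.integral_hasDerivAt_right hint2
    · exact (ContinuousOn.stronglyMeasurableAtFilter isOpen_Ioo
        (sliceZ (fun p => p.1 * Bφ p.1 p.2.1 p.2.2)
          (continuous_fst.continuousOn.mul hcBφ) R φ hRmem)) Z hZmem
    · exact contAtZ (fun p => p.1 * Bφ p.1 p.2.1 p.2.2)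
        (continuous_fst.continuousOn.mul hcBφ) hmem
  have hχZ : HasDerivAt (fun Z' => χ R φ Z') (R * Bφ R φ Z) Z := by
    have heq : (fun Z' => χ R φ Z') = fun Z' => ∫ z' in Z₀..Z', R * Bφ R φ z' :=
      funext fun Z' => hχ R φ Z'
    rw [heq]; exact hFTC2
  -- Part 3 : R-derivative of ψ (dominated differentiation under the integral)
  obtain ⟨ε, hε, hIccsub⟩ : ∃ ε > 0, Set.Icc (R - ε) (R + ε) ⊆ Set.Ioo r₀ R₁ := by
    refine ⟨min (R - r₀) (R₁ - R) / 2,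
      div_pos (lt_min (sub_pos.mpr hRmem.1) (sub_pos.mpr hRmem.2)) two_pos, ?_⟩
    intro x hx
    have h1 : min (R - r₀) (R₁ - R) ≤ R - r₀ := min_le_left _ _
    have h2 : min (R - r₀) (R₁ - R) ≤ R₁ - R := min_le_right _ _
    obtain ⟨hx1, hx2⟩ := hx
    constructor
    · have := hRmem.1; linarith
    · have := hRmem.2; linarith
  have hballsub : Metric.ball R ε ⊆ Set.Icc (R - ε) (R + ε) := by
    rw [Real.ball_eq_Ioo]; exact Set.Ioo_subset_Icc_self
  have hKsub : Set.Icc (R - ε) (R + ε) ×ˢ ({φ} : Set ℝ) ×ˢ Set.uIcc Z₀ Z ⊆ D := by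
    rintro ⟨x, y, z⟩ ⟨hx, hy, hz⟩
    rcases hy with rfl
    exact hmemD (hIccsub hx) (huIcc hz)
  have hKcomp : IsCompact (Set.Icc (R - ε) (R + ε) ×ˢ ({φ} : Set ℝ) ×ˢ Set.uIcc Z₀ Z) :=
    isCompact_Icc.prod (isCompact_singleton.prod isCompact_uIcc)
  have hGcont : ContinuousOn (fun p : ℝ × ℝ × ℝ => 1 * BR p.1 p.2.1 p.2.2 + p.1 * dBR1 p) D :=
    (continuousOn_const.mul hcBR).add (continuous_fst.continuousOn.mul hcdBR1)
  obtain ⟨C, hC⟩ := hKcomp.exists_bound_of_continuousOn (hGcont.mono hKsub)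
  have hmeas1 : ∀ᶠ x in nhds R, AEStronglyMeasurable (fun t => x * BR x φ t)
      (volume.restrict (Set.uIoc Z₀ Z)) := by
    filter_upwards [Metric.ball_mem_nhds R hε] with x hx
    have hxI : x ∈ Set.Ioo r₀ R₁ := hIccsub (hballsub hx)
    exact (((sliceZ (fun p => p.1 * BR p.1 p.2.1 p.2.2)
      (continuous_fst.continuousOn.mul hcBR) x φ hxI).mono
      (Set.uIoc_subset_uIcc.trans huIcc)).aestronglyMeasurable measurableSet_uIoc)
  have hmeas1' : AEStronglyMeasurable (fun t => 1 * BR R φ t + R * dBR1 (R, φ, t))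
      (volume.restrict (Set.uIoc Z₀ Z)) :=
    (((sliceZ (fun p => 1 * BR p.1 p.2.1 p.2.2 + p.1 * dBR1 p) hGcont R φ hRmem).mono
      (Set.uIoc_subset_uIcc.trans huIcc)).aestronglyMeasurable measurableSet_uIoc)
  have hbound1 : ∀ᵐ t ∂(volume : Measure ℝ), t ∈ Set.uIoc Z₀ Z →
      ∀ x ∈ Metric.ball R ε, ‖1 * BR x φ t + x * dBR1 (x, φ, t)‖ ≤ C := by
    apply Filter.Eventually.of_forall
    intro t ht x hx
    exact hC (x, φ, t) ⟨hballsub hx, rfl, Set.uIoc_subset_uIcc ht⟩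
  have hdiff1 : ∀ᵐ t ∂(volume : Measure ℝ), t ∈ Set.uIoc Z₀ Z →
      ∀ x ∈ Metric.ball R ε, HasDerivAt (fun x' => x' * BR x' φ t)
        (1 * BR x φ t + x * dBR1 (x, φ, t)) x := by
    apply Filter.Eventually.of_forall
    intro t ht x hx
    exact hg (hmemD (hIccsub (hballsub hx)) (huIcc (Set.uIoc_subset_uIcc ht)))
  obtain ⟨hg'int, hIμ⟩ := intervalIntegral.hasDerivAt_integral_of_dominated_loc_of_deriv_le
    (F := fun x t => x * BR x φ t)
    (F' := fun x t => 1 * BR x φ t + x * dBR1 (x, φ, t))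
    (bound := fun _ => C) (Metric.ball_mem_nhds R hε) hmeas1 hint1 hmeas1' hbound1 intervalIntegrable_const hdiff1
  -- the R₀..R term
  have hcslice : ContinuousOn (fun r => r * BZ r φ Z₀) (Set.Ioo r₀ R₁) :=
    continuousOn_id.mul (sliceR (fun p => BZ p.1 p.2.1 p.2.2) hcBZ φ Z₀ hZ₀mem)
  have hintR : IntervalIntegrable (fun r' => r' * BZ r' φ Z₀) volume R₀ R :=
    (hcslice.mono huIccR).intervalIntegrable
  have hFTCR : HasDerivAt (fun r => ∫ r' in R₀..r, r' * BZ r' φ Z₀) (R * BZ R φ Z₀) R := by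
    apply intervalIntegral.integral_hasDerivAt_right hintR
    · exact (ContinuousOn.stronglyMeasurableAtFilter isOpen_Ioo hcslice) R hRmem
    · exact (hcslice.continuousAt (isOpen_Ioo.mem_nhds hRmem))
  have hψR : HasDerivAt (fun R' => ψ R' φ Z)
      (-(∫ t in Z₀..Z, (1 * BR R φ t + R * dBR1 (R, φ, t))) + R * BZ R φ Z₀) R := by
    have heq : (fun R' => ψ R' φ Z)
        = fun R' => -(∫ z' in Z₀..Z, R' * BR R' φ z') + ∫ r' in R₀..R', r' * BZ r' φ Z₀ :=
      funext fun R' => hψ R' φ Z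
    rw [heq]
    exact hIμ.neg.add hFTCR
  -- φ-derivative of χ (dominated differentiation)
  have hK2sub : ({R} : Set ℝ) ×ˢ Set.Icc (φ - 1) (φ + 1) ×ˢ Set.uIcc Z₀ Z ⊆ D := by
    rintro ⟨x, y, z⟩ ⟨hx, hy, hz⟩
    rcases hx with rfl
    exact hmemD hRmem (huIcc hz)
  have hK2comp : IsCompact (({R} : Set ℝ) ×ˢ Set.Icc (φ - 1) (φ + 1) ×ˢ Set.uIcc Z₀ Z) :=
    isCompact_singleton.prod (isCompact_Icc.prod isCompact_uIcc)
  have hG2cont : ContinuousOn (fun p : ℝ × ℝ × ℝ => R * dBφ2 p) D :=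
    continuousOn_const.mul hcdBφ2
  obtain ⟨C2, hC2⟩ := hK2comp.exists_bound_of_continuousOn (hG2cont.mono hK2sub)
  have hball2 : Metric.ball φ 1 ⊆ Set.Icc (φ - 1) (φ + 1) := by
    rw [Real.ball_eq_Ioo]; exact Set.Ioo_subset_Icc_self
  have sliceφ : ∀ (G : ℝ × ℝ × ℝ → ℝ), ContinuousOn G D → ∀ x : ℝ,
      ContinuousOn (fun z => G (R, x, z)) (Set.Ioo Za Zb) := by
    intro G hG x
    exact hG.comp ((continuous_const.prodMk
      (continuous_const.prodMk continuous_id)).continuousOn)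
      (fun z hz => hmemD hRmem hz)
  have hmeas2 : ∀ᶠ x in nhds φ, AEStronglyMeasurable (fun t => R * Bφ R x t)
      (volume.restrict (Set.uIoc Z₀ Z)) := by
    apply Filter.Eventually.of_forall
    intro x
    exact (((sliceφ (fun p => R * Bφ p.1 p.2.1 p.2.2)
      (continuousOn_const.mul hcBφ) x).mono
      (Set.uIoc_subset_uIcc.trans huIcc)).aestronglyMeasurable measurableSet_uIoc)
  have hmeas2' : AEStronglyMeasurable (fun t => R * dBφ2 (R, φ, t))
      (volume.restrict (Set.uIoc Z₀ Z)) :=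
    (((sliceφ (fun p => R * dBφ2 p) hG2cont φ).mono
      (Set.uIoc_subset_uIcc.trans huIcc)).aestronglyMeasurable measurableSet_uIoc)
  have hbound2 : ∀ᵐ t ∂(volume : Measure ℝ), t ∈ Set.uIoc Z₀ Z →
      ∀ x ∈ Metric.ball φ 1, ‖R * dBφ2 (R, x, t)‖ ≤ C2 := by
    apply Filter.Eventually.of_forall
    intro t ht x hx
    exact hC2 (R, x, t) ⟨rfl, hball2 hx, Set.uIoc_subset_uIcc ht⟩
  have hdiff2 : ∀ᵐ t ∂(volume : Measure ℝ), t ∈ Set.uIoc Z₀ Z →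
      ∀ x ∈ Metric.ball φ 1, HasDerivAt (fun x' => R * Bφ R x' t)
        (R * dBφ2 (R, x, t)) x := by
    apply Filter.Eventually.of_forall
    intro t ht x hx
    exact HasDerivAt.const_mul R (hpartφ (hmemD hRmem (huIcc (Set.uIoc_subset_uIcc ht))))
  obtain ⟨-, hIφ⟩ := intervalIntegral.hasDerivAt_integral_of_dominated_loc_of_deriv_le
    (F := fun x t => R * Bφ R x t)
    (F' := fun x t => R * dBφ2 (R, x, t))
    (bound := fun _ => C2) (Metric.ball_mem_nhds φ one_pos) hmeas2 hint2 hmeas2' hbound2 intervalIntegrable_const hdiff2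
  have hχφ : HasDerivAt (fun φ' => χ R φ' Z) (∫ t in Z₀..Z, R * dBφ2 (R, φ, t)) φ := by
    have heq : (fun φ' => χ R φ' Z) = fun φ' => ∫ z' in Z₀..Z, R * Bφ R φ' z' :=
      funext fun φ' => hχ R φ' Z
    rw [heq]; exact hIφ
  -- FTC2 for BZ in Z
  have hFTCZ : (∫ t in Z₀..Z, dBZ3 (R, φ, t)) = BZ R φ Z - BZ R φ Z₀ := by
    apply intervalIntegral.integral_eq_sub_of_hasDerivAt
    · intro t ht
      exact hpartZ (hmemD hRmem (huIcc ht))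
    · exact intZ dBZ3 hcdBZ3 R φ hRmem
  -- rewrite the R-integral using the divergence identity
  have hint_dBφ2 : IntervalIntegrable (fun t => dBφ2 (R, φ, t)) volume Z₀ Z :=
    intZ dBφ2 hcdBφ2 R φ hRmem
  have hint_dBZ3 : IntervalIntegrable (fun t => dBZ3 (R, φ, t)) volume Z₀ Z :=
    intZ dBZ3 hcdBZ3 R φ hRmem
  have hEq : (∫ t in Z₀..Z, (1 * BR R φ t + R * dBR1 (R, φ, t)))
      = -((∫ t in Z₀..Z, dBφ2 (R, φ, t)) + R * ∫ t in Z₀..Z, dBZ3 (R, φ, t)) := by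
    rw [← intervalIntegral.integral_const_mul,
      ← intervalIntegral.integral_add hint_dBφ2 (hint_dBZ3.const_mul R),
      ← intervalIntegral.integral_neg]
    apply intervalIntegral.integral_congr
    intro t ht
    exact hdiv' (huIcc ht)
  have hχφval : (∫ t in Z₀..Z, R * dBφ2 (R, φ, t)) = R * ∫ t in Z₀..Z, dBφ2 (R, φ, t) :=
    intervalIntegral.integral_const_mul _ _
  -- Conclusion
  refine ⟨?_, ?_, ?_⟩
  · rw [hψZ.deriv]; field_simp
  · rw [hχZ.deriv]; field_simp
  · rw [hψR.deriv, hχφ.deriv, hEq, hχφval, hFTCZ]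
    field_simp
    ring
end

section
/- Let a < b be real numbers, let m be a natural number, let f : ℝ → ℝ be (2m + 2)-times continuously differentiable on [a, b], and let p be the unique polynomial of degree at most 2m + 1 satisfying p^(l)(a) = f^(l)(a) and p^(l)(b) = f^(l)(b) for all 0 ≤ l ≤ m. Then for every x ∈ [a, b] there exists ξ ∈ [a, b] such that f(x) − p(x) = f^(2m+2)(ξ) / (2m + 2)! · ((x − a)(x − b))^(m+1). In particular, sup_{x ∈ [a,b]} |f(x) − p(x)| ≤ (sup_{ξ ∈ [a,b]} |f^(2m+2)(ξ)|) · (b − a)^(2m+2) / (4^(m+1) · (2m + 2)!). -/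
open Set Polynomial

private lemma polyContDiff (r : Polynomial ℝ) {n : WithTop ℕ∞} :
    ContDiff ℝ n (fun t : ℝ => r.eval t) := by
  induction r using Polynomial.induction_on' with
  | add p q hp hq => simpa [Polynomial.eval_add] using hp.add hq
  | monomial k c =>
      simpa [Polynomial.eval_monomial] using (contDiff_const (c := c)).mul (contDiff_id.pow k)

private lemma iterDerivAdd (p q : Polynomial ℝ) (k : ℕ) :
    Polynomial.derivative^[k] (p + q) =
      Polynomial.derivative^[k] p + Polynomial.derivative^[k] q := by
  induction k with
  | zero => simp
  | succ k ih => rw [Function.iterate_succ_apply', Function.iterate_succ_apply',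
      Function.iterate_succ_apply', ih, derivative_add]

private lemma poly_idw (r : Polynomial ℝ) (l : ℕ) {s : Set ℝ} (hs : UniqueDiffOn ℝ s)
    {x : ℝ} (hx : x ∈ s) :
    iteratedDerivWithin l (fun t => r.eval t) s x = (Polynomial.derivative^[l] r).eval x := by
  induction l generalizing r with
  | zero => simp
  | succ l ih =>
    rw [iteratedDerivWithin_succ']
    have hcg : Set.EqOn (derivWithin (fun t => r.eval t) s) (fun t => r.derivative.eval t) s :=
      fun y hy => r.derivWithin (hs.uniqueDiffWithinAt hy)
    calc iteratedDerivWithin l (derivWithin (fun t => r.eval t) s) s x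
        = iteratedDerivWithin l (fun t => r.derivative.eval t) s x :=
          iteratedDerivWithin_congr hcg hx
      _ = (Polynomial.derivative^[l] r.derivative).eval x := ih _
      _ = (Polynomial.derivative^[l+1] r).eval x := by rw [← Function.iterate_succ_apply]

private lemma rolle_step {a b : ℝ} (hab : a < b) (g : ℝ → ℝ) (j : ℕ)
    (hcont : ContinuousOn (iteratedDerivWithin j g (Set.Icc a b)) (Set.Icc a b))
    {c d : ℝ} (hc : a ≤ c) (hcd : c < d) (hd : d ≤ b)
    (h0 : iteratedDerivWithin j g (Set.Icc a b) c = 0)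
    (h1 : iteratedDerivWithin j g (Set.Icc a b) d = 0) :
    ∃ ξ ∈ Set.Ioo c d, iteratedDerivWithin (j+1) g (Set.Icc a b) ξ = 0 := by
  obtain ⟨ξ, hξ, hderiv⟩ := exists_deriv_eq_zero hcd
    (hcont.mono (Set.Icc_subset_Icc hc hd)) (h0.trans h1.symm)
  refine ⟨ξ, hξ, ?_⟩
  have hξab : ξ ∈ Set.Ioo a b := ⟨lt_of_le_of_lt hc hξ.1, lt_of_lt_of_le hξ.2 hd⟩
  rw [iteratedDerivWithin_succ,
    derivWithin_of_mem_nhds (Icc_mem_nhds hξab.1 hξab.2)]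
  exact hderiv

private lemma rolle_chain {a b : ℝ} (hab : a < b) (g : ℝ → ℝ) (j : ℕ)
    (hcont : ContinuousOn (iteratedDerivWithin j g (Set.Icc a b)) (Set.Icc a b))
    (L : ℕ) (d : ℕ → ℝ)
    (hmem : ∀ i ≤ L, d i ∈ Set.Icc a b)
    (hmono : ∀ i < L, d i < d (i+1))
    (hzero : ∀ i ≤ L, iteratedDerivWithin j g (Set.Icc a b) (d i) = 0) :
    ∃ ξ : ℕ → ℝ, (∀ i < L, ξ i ∈ Set.Ioo (d i) (d (i+1))) ∧
      (∀ i < L, iteratedDerivWithin (j+1) g (Set.Icc a b) (ξ i) = 0) := by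
  have H : ∀ i, ∃ x, i < L →
      x ∈ Set.Ioo (d i) (d (i+1)) ∧ iteratedDerivWithin (j+1) g (Set.Icc a b) x = 0 := by
    intro i
    by_cases hi : i < L
    · obtain ⟨x, hx1, hx2⟩ := rolle_step hab g j hcont (hmem i hi.le).1 (hmono i hi)
        (hmem (i+1) hi).2 (hzero i hi.le) (hzero (i+1) hi)
      exact ⟨x, fun _ => ⟨hx1, hx2⟩⟩
    · exact ⟨0, fun h => absurd h hi⟩
  choose ξ hξ using H
  exact ⟨ξ, fun i hi => (hξ i hi).1, fun i hi => (hξ i hi).2⟩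

private lemma gen_rolle {a b : ℝ} (hab : a < b) (m : ℕ) (g : ℝ → ℝ)
    (hg : ContDiffOn ℝ (2*m+2 : ℕ) g (Set.Icc a b))
    (hends : ∀ l ≤ m, iteratedDerivWithin l g (Set.Icc a b) a = 0 ∧
      iteratedDerivWithin l g (Set.Icc a b) b = 0)
    {x : ℝ} (hx : x ∈ Set.Ioo a b) (hgx : g x = 0) :
    ∃ ξ ∈ Set.Ioo a b, iteratedDerivWithin (2*m+2) g (Set.Icc a b) ξ = 0 := by
  have hcont : ∀ l ≤ 2*m+2, ContinuousOn (iteratedDerivWithin l g (Set.Icc a b)) (Set.Icc a b) := by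
    intro l hl
    exact hg.continuousOn_iteratedDerivWithin (by exact_mod_cast hl) (uniqueDiffOn_Icc hab)
  -- Phase 1
  have phase1 : ∀ j ≤ m+1, ∃ c : ℕ → ℝ,
      (∀ i ≤ j, c i ∈ Set.Ioo a b) ∧ (∀ i < j, c i < c (i+1)) ∧
      (∀ i ≤ j, iteratedDerivWithin j g (Set.Icc a b) (c i) = 0) := by
    intro j
    induction j with
    | zero =>
      intro _
      refine ⟨fun _ => x, fun i _ => hx, by omega, fun i _ => ?_⟩
      simpa [iteratedDerivWithin_zero] using hgx
    | succ j ih =>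
      intro hj
      obtain ⟨c, hmem, hmono, hzero⟩ := ih (by omega)
      set d : ℕ → ℝ := fun i => if i = 0 then a else if i ≤ j+1 then c (i-1) else b with hd
      have hda : d 0 = a := by simp [hd]
      have hdb : d (j+2) = b := by simp [hd]
      have hdc : ∀ i ≤ j, d (i+1) = c i := by
        intro i hi; simp only [hd]; rw [if_neg (by omega), if_pos (by omega), Nat.add_sub_cancel]
      have hdmem : ∀ i ≤ j+2, d i ∈ Set.Icc a b := by
        intro i hi
        rcases Nat.eq_zero_or_pos i with h0 | h0
        · subst h0; rw [hda]; exact Set.left_mem_Icc.2 hab.le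
        · rcases Nat.lt_or_ge i (j+2) with h2 | h2
          · obtain ⟨i', rfl⟩ := Nat.exists_eq_add_of_le h0
            rw [show 1 + i' = i' + 1 by omega, hdc i' (by omega)]
            exact Set.Ioo_subset_Icc_self (hmem i' (by omega))
          · have : i = j+2 := by omega
            subst this; rw [hdb]; exact Set.right_mem_Icc.2 hab.le
      have hdmono : ∀ i < j+2, d i < d (i+1) := by
        intro i hi
        rcases Nat.eq_zero_or_pos i with h0 | h0
        · subst h0; rw [hda, hdc 0 (by omega)]; exact (hmem 0 (by omega)).1
        · rcases Nat.lt_or_ge i (j+1) with h2 | h2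
          · obtain ⟨i', rfl⟩ := Nat.exists_eq_add_of_le h0
            rw [show 1 + i' = i' + 1 by omega, hdc i' (by omega), hdc (i'+1) (by omega)]
            exact hmono i' (by omega)
          · have : i = j+1 := by omega
            subst this
            rw [hdc j (by omega), hdb]
            exact (hmem j (by omega)).2
      have hdzero : ∀ i ≤ j+2, iteratedDerivWithin j g (Set.Icc a b) (d i) = 0 := by
        intro i hi
        rcases Nat.eq_zero_or_pos i with h0 | h0
        · subst h0; rw [hda]; exact (hends j (by omega)).1
        · rcases Nat.lt_or_ge i (j+2) with h2 | h2
          · obtain ⟨i', rfl⟩ := Nat.exists_eq_add_of_le h0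
            rw [show 1 + i' = i' + 1 by omega, hdc i' (by omega)]
            exact hzero i' (by omega)
          · have : i = j+2 := by omega
            subst this; rw [hdb]; exact (hends j (by omega)).2
      obtain ⟨ξ, hξ1, hξ2⟩ := rolle_chain hab g j (hcont j (by omega)) (j+2) d hdmem hdmono hdzero
      refine ⟨ξ, ?_, ?_, fun i hi => hξ2 i (by omega)⟩
      · intro i hi
        exact ⟨lt_of_le_of_lt (hdmem i (by omega)).1 (hξ1 i (by omega)).1,
          lt_of_lt_of_le (hξ1 i (by omega)).2 (hdmem (i+1) (by omega)).2⟩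
      · intro i hi
        exact lt_trans (hξ1 i (by omega)).2 (hξ1 (i+1) (by omega)).1
  obtain ⟨c0, hmem0, hmono0, hzero0⟩ := phase1 (m+1) le_rfl
  -- Phase 2
  have phase2 : ∀ r ≤ m+1, ∃ c : ℕ → ℝ,
      (∀ i ≤ m+1-r, c i ∈ Set.Ioo a b) ∧ (∀ i < m+1-r, c i < c (i+1)) ∧
      (∀ i ≤ m+1-r, iteratedDerivWithin (m+1+r) g (Set.Icc a b) (c i) = 0) := by
    intro r
    induction r with
    | zero => intro _; exact ⟨c0, hmem0, hmono0, hzero0⟩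
    | succ r ih =>
      intro hr
      obtain ⟨c, hmem, hmono, hzero⟩ := ih (by omega)
      obtain ⟨ξ, hξ1, hξ2⟩ := rolle_chain hab g (m+1+r) (hcont _ (by omega)) (m+1-r) c
        (fun i hi => Set.Ioo_subset_Icc_self (hmem i hi)) hmono hzero
      have hk : m+1-(r+1) < m+1-r := by omega
      refine ⟨ξ, ?_, ?_, ?_⟩
      · intro i hi
        exact ⟨lt_of_le_of_lt (hmem i (by omega)).1.le (hξ1 i (by omega)).1,
          lt_of_lt_of_le (hξ1 i (by omega)).2 (hmem (i+1) (by omega)).2.le⟩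
      · intro i hi
        exact lt_trans (hξ1 i (by omega)).2 (hξ1 (i+1) (by omega)).1
      · intro i hi
        have := hξ2 i (by omega)
        rwa [show m+1+r+1 = m+1+(r+1) by omega] at this
  obtain ⟨c, hmem, _, hzero⟩ := phase2 (m+1) le_rfl
  refine ⟨c 0, hmem 0 (by omega), ?_⟩
  have := hzero 0 (by omega)
  rwa [show m+1+(m+1) = 2*m+2 by omega] at this




/-- The classical two-point Hermite interpolation error formula.
If f is C^(2m+2) on [a, b] and p is the (unique) polynomial of degree ≤ 2m+1
matching f and its first m derivatives at a and b, then for every x ∈ [a, b]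
there is ξ ∈ [a, b] with
f(x) − p(x) = f^(2m+2)(ξ)/(2m+2)! · ((x−a)(x−b))^(m+1); in particular, for any
bound M on |f^(2m+2)| on [a, b],
|f(x) − p(x)| ≤ M (b−a)^(2m+2) / (4^(m+1) (2m+2)!). -/
theorem hermite_interpolation_error
    (a b : ℝ) (hab : a < b) (m : ℕ) (f : ℝ → ℝ)
    (hf : ContDiffOn ℝ (2 * m + 2) f (Set.Icc a b))
    (p : Polynomial ℝ) (hdeg : p.natDegree ≤ 2 * m + 1)
    (hmatch : ∀ l ≤ m,
      (Polynomial.derivative^[l] p).eval a = iteratedDerivWithin l f (Set.Icc a b) a ∧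
      (Polynomial.derivative^[l] p).eval b = iteratedDerivWithin l f (Set.Icc a b) b)
    (M : ℝ)
    (hM : ∀ ξ ∈ Set.Icc a b,
      |iteratedDerivWithin (2 * m + 2) f (Set.Icc a b) ξ| ≤ M) :
    ∀ x ∈ Set.Icc a b,
      (∃ ξ ∈ Set.Icc a b,
        f x - p.eval x =
          iteratedDerivWithin (2 * m + 2) f (Set.Icc a b) ξ /
              (Nat.factorial (2 * m + 2)) *
            ((x - a) * (x - b)) ^ (m + 1)) ∧
      |f x - p.eval x| ≤
        M * (b - a) ^ (2 * m + 2) / (4 ^ (m + 1) * Nat.factorial (2 * m + 2)) := by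
  intro x hx
  have hs : UniqueDiffOn ℝ (Set.Icc a b) := uniqueDiffOn_Icc hab
  have key : ∃ ξ ∈ Set.Icc a b, f x - p.eval x =
      iteratedDerivWithin (2*m+2) f (Set.Icc a b) ξ / (Nat.factorial (2*m+2)) *
        ((x-a)*(x-b))^(m+1) := by
    rcases eq_or_lt_of_le hx.1 with hxa | hxa
    · -- x = a
      refine ⟨b, Set.right_mem_Icc.2 hab.le, ?_⟩
      have h0 := (hmatch 0 (Nat.zero_le m)).1
      simp only [Function.iterate_zero_apply, iteratedDerivWithin_zero] at h0
      rw [← hxa, h0]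
      simp
    rcases eq_or_lt_of_le hx.2 with hxb | hxb
    · -- x = b
      refine ⟨a, Set.left_mem_Icc.2 hab.le, ?_⟩
      have h0 := (hmatch 0 (Nat.zero_le m)).2
      simp only [Function.iterate_zero_apply, iteratedDerivWithin_zero] at h0
      rw [hxb, h0]
      simp
    -- interior case
    set q : Polynomial ℝ := ((X - C a) * (X - C b))^(m+1) with hq
    have hqeval : ∀ t, q.eval t = ((t-a)*(t-b))^(m+1) := by intro t; simp [hq]
    have hwx : ((x-a)*(x-b))^(m+1) ≠ 0 :=
      pow_ne_zero _ (mul_ne_zero (sub_ne_zero.2 (ne_of_gt hxa)) (sub_ne_zero.2 (ne_of_lt hxb)))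
    set K : ℝ := (f x - p.eval x) / ((x-a)*(x-b))^(m+1) with hK
    set r : Polynomial ℝ := p + C K * q with hr
    set g : ℝ → ℝ := fun t => f t + (-r).eval t with hgdef
    have hg : ContDiffOn ℝ (2*m+2 : ℕ) g (Set.Icc a b) :=
      hf.add ((polyContDiff (-r)).contDiffOn)
    have hG : ∀ l ≤ 2*m+2, ∀ y ∈ Set.Icc a b, iteratedDerivWithin l g (Set.Icc a b) y =
        iteratedDerivWithin l f (Set.Icc a b) y - (Polynomial.derivative^[l] r).eval y := by
      intro l hl y hy
      have : iteratedDerivWithin l g (Set.Icc a b) y =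
          iteratedDerivWithin l f (Set.Icc a b) y +
            iteratedDerivWithin l (fun t => (-r).eval t) (Set.Icc a b) y :=
        iteratedDerivWithin_add hy hs ((hf.of_le (m := (l : WithTop ℕ∞)) (by exact_mod_cast hl)).contDiffWithinAt hy)
          ((polyContDiff (-r)).contDiffWithinAt)
      rw [this, poly_idw (-r) l hs hy, Polynomial.iterate_derivative_neg, eval_neg, sub_eq_add_neg]
    have hq0 : q ≠ 0 := (((monic_X_sub_C a).mul (monic_X_sub_C b)).pow _).ne_zero
    have hqnd : q.natDegree = 2*m+2 := by
      rw [hq, natDegree_pow, natDegree_mul (X_sub_C_ne_zero a) (X_sub_C_ne_zero b),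
        natDegree_X_sub_C, natDegree_X_sub_C]
      ring
    have hroot : ∀ l ≤ m, ∀ t ∈ ({a, b} : Set ℝ), (Polynomial.derivative^[l] q).eval t = 0 := by
      intro l hl t ht
      have hdvd : (X - C t)^(m+1) ∣ q := by
        rcases ht with rfl | rfl
        · rw [hq, mul_pow]; exact dvd_mul_right _ _
        · rw [hq, mul_pow]; exact dvd_mul_left _ _
      have hmult : (m+1 : ℕ) ≤ q.rootMultiplicity t := (le_rootMultiplicity_iff hq0).2 hdvd
      exact isRoot_iterate_derivative_of_lt_rootMultiplicity
        (lt_of_lt_of_le (Nat.lt_succ_of_le hl) hmult)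
    have hrl : ∀ l t, (Polynomial.derivative^[l] r).eval t =
        (Polynomial.derivative^[l] p).eval t + K * (Polynomial.derivative^[l] q).eval t := by
      intro l t
      rw [hr, iterDerivAdd, Polynomial.iterate_derivative_C_mul, eval_add, eval_mul, eval_C]
    have hends : ∀ l ≤ m, iteratedDerivWithin l g (Set.Icc a b) a = 0 ∧
        iteratedDerivWithin l g (Set.Icc a b) b = 0 := by
      intro l hl
      constructor
      · rw [hG l (by omega) a (Set.left_mem_Icc.2 hab.le), hrl l a,
          hroot l hl a (by simp), (hmatch l hl).1]
        ring
      · rw [hG l (by omega) b (Set.right_mem_Icc.2 hab.le), hrl l b,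
          hroot l hl b (by simp), (hmatch l hl).2]
        ring
    have hgx : g x = 0 := by
      have hKw : K * ((x-a)*(x-b))^(m+1) = f x - p.eval x := div_mul_cancel₀ _ hwx
      have hre : r.eval x = p.eval x + K * ((x-a)*(x-b))^(m+1) := by
        rw [hr, eval_add, eval_mul, eval_C, hqeval]
      show f x + (-r).eval x = 0
      rw [eval_neg, hre, hKw]
      ring
    obtain ⟨ξ, hξ, hξ0⟩ := gen_rolle hab m g hg hends ⟨hxa, hxb⟩ hgx
    have hξicc : ξ ∈ Set.Icc a b := Set.Ioo_subset_Icc_self hξ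
    have hpz : Polynomial.derivative^[2*m+2] p = 0 :=
      iterate_derivative_eq_zero (lt_of_le_of_lt hdeg (by omega))
    have hqz : (Polynomial.derivative^[2*m+2] q).eval ξ = ((2*m+2).factorial : ℝ) := by
      have hdegle : (Polynomial.derivative^[2*m+2] q).natDegree ≤ 0 := by
        refine le_trans (natDegree_iterate_derivative q _) ?_
        rw [hqnd]; omega
      have hCform := Polynomial.eq_C_of_natDegree_le_zero hdegle
      rw [hCform, eval_C, coeff_iterate_derivative, zero_add, Nat.descFactorial_self]
      -- goal after hcoef: factorial smul 1
      have hcoef : q.coeff (2*m+2) = 1 := by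
        have : q.Monic := ((monic_X_sub_C a).mul (monic_X_sub_C b)).pow _
        have := this.coeff_natDegree
        rwa [hqnd] at this
      rw [hcoef]
      simp
    have hFK : iteratedDerivWithin (2*m+2) f (Set.Icc a b) ξ = K * ((2*m+2).factorial : ℝ) := by
      have hG2 := hG (2*m+2) le_rfl ξ hξicc
      rw [hξ0, hrl (2*m+2) ξ, hpz] at hG2
      simp only [eval_zero, zero_add] at hG2
      rw [hqz] at hG2
      linarith
    refine ⟨ξ, hξicc, ?_⟩
    have hfacne : ((2*m+2).factorial : ℝ) ≠ 0 := Nat.cast_ne_zero.2 (Nat.factorial_ne_zero _)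
    rw [hFK, mul_div_assoc, div_self hfacne, mul_one, hK, div_mul_cancel₀ _ hwx]
  obtain ⟨ξ, hξ, hform⟩ := key
  refine ⟨⟨ξ, hξ, hform⟩, ?_⟩
  have hM0 : 0 ≤ M := le_trans (abs_nonneg _) (hM ξ hξ)
  have hfac : (0:ℝ) < ((2*m+2).factorial : ℝ) := Nat.cast_pos.2 (Nat.factorial_pos _)
  have h2 : |(x-a)*(x-b)| ≤ (b-a)^2/4 := by
    have h1 := hx.1; have h2 := hx.2
    rw [abs_le]
    constructor <;> nlinarith [sq_nonneg ((x-a)-(b-x)), sq_nonneg ((x-a)+(b-x))]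
  have hrhs : M * (b - a) ^ (2 * m + 2) / (4 ^ (m + 1) * ((2*m+2).factorial : ℝ)) =
      (M / ((2*m+2).factorial : ℝ)) * ((b-a)^2/4)^(m+1) := by
    have hpow : ((b-a)^2)^(m+1) = (b-a)^(2*m+2) := by
      rw [← pow_mul]
      congr 1
    rw [div_pow, hpow, div_mul_div_comm]
    ring
  rw [hform, abs_mul, abs_div, abs_pow, Nat.abs_cast, hrhs]
  have hb2 : |(x-a)*(x-b)|^(m+1) ≤ ((b-a)^2/4)^(m+1) := pow_le_pow_left₀ (abs_nonneg _) h2 _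
  have hb1 : |iteratedDerivWithin (2*m+2) f (Set.Icc a b) ξ| / ((2*m+2).factorial : ℝ) ≤
      M / ((2*m+2).factorial : ℝ) := (div_le_div_iff_of_pos_right hfac).2 (hM ξ hξ)
  exact mul_le_mul hb1 hb2 (pow_nonneg (abs_nonneg _) _) (div_nonneg hM0 hfac.le)
end

section
/- Let a be a real number, h > 0, and let f : ℝ → ℝ be 4-times continuously differentiable on [a, a + h], with M = sup_{t ∈ [a, a+h]} |f⁗(t)|. Then |∫_a^{a+h} f(t) dt − (h/6)·(f(a) + 4f(a + h/2) + f(a + h))| ≤ M·h⁵ / 2880. -/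
open Set

/-- One-sided Grönwall-type comparison. -/
lemma simpson_aux_one (r C : ℝ) (k : ℕ) (u : ℝ → ℝ)
    (hu : ContinuousOn u (Icc 0 r)) (h0 : u 0 = 0)
    (hd : ∀ x ∈ Ioo 0 r, ∃ u', HasDerivAt u u' x ∧ u' ≤ C * x ^ k) :
    ∀ x ∈ Icc 0 r, u x ≤ C / (k + 1) * x ^ (k + 1) := by
  intro x hx
  set v : ℝ → ℝ := fun x => C / (k + 1) * x ^ (k + 1) - u x with hv
  have hk : (k : ℝ) + 1 ≠ 0 := by positivity
  have hmono : MonotoneOn v (Icc 0 r) := by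
    have hder : ∀ y ∈ Ioo 0 r, ∃ v', HasDerivAt v v' y ∧ 0 ≤ v' := by
      intro y hy
      obtain ⟨u', hu', hle⟩ := hd y hy
      refine ⟨C * y ^ k - u', ?_, by linarith⟩
      have h1 := (hasDerivAt_pow (k + 1) y).const_mul (C / ((k:ℝ) + 1))
      have h1' : HasDerivAt (fun x : ℝ => C / ((k:ℝ) + 1) * x ^ (k + 1)) (C * y ^ k) y := by
        refine h1.congr_deriv ?_
        simp only [Nat.add_sub_cancel]
        push_cast
        field_simp
      exact h1'.sub hu'
    apply monotoneOn_of_deriv_nonneg (convex_Icc 0 r)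
    · exact (continuousOn_const.mul (continuousOn_pow _)).sub hu
    · intro y hy
      rw [interior_Icc] at hy
      obtain ⟨v', hv', _⟩ := hder y hy
      exact hv'.differentiableAt.differentiableWithinAt
    · intro y hy
      rw [interior_Icc] at hy
      obtain ⟨v', hv', hpos⟩ := hder y hy
      rw [hv'.deriv]; exact hpos
  have := hmono (show (0:ℝ) ∈ Icc 0 r from ⟨le_refl _, hx.1.trans hx.2⟩) hx hx.1
  simp only [hv, h0, sub_zero, ne_eq] at this
  have h00 : C / (k + 1) * (0:ℝ) ^ (k + 1) = 0 := by simp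
  rw [h00] at this
  linarith

lemma simpson_aux (r C : ℝ) (k : ℕ) (u : ℝ → ℝ)
    (hu : ContinuousOn u (Icc 0 r)) (h0 : u 0 = 0)
    (hd : ∀ x ∈ Ioo 0 r, ∃ u', HasDerivAt u u' x ∧ |u'| ≤ C * x ^ k) :
    ∀ x ∈ Icc 0 r, |u x| ≤ C / (k + 1) * x ^ (k + 1) := by
  intro x hx
  rw [abs_le]
  constructor
  · have := simpson_aux_one r C k (fun x => -u x) hu.neg (by simp [h0])
      (fun y hy => by
        obtain ⟨u', hu', hle⟩ := hd y hy
        exact ⟨-u', hu'.neg, by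
          have := (abs_le.mp hle).1; linarith⟩) x hx
    simpa using by linarith [this]
  · exact simpson_aux_one r C k u hu h0
      (fun y hy => by
        obtain ⟨u', hu', hle⟩ := hd y hy
        exact ⟨u', hu', (abs_le.mp hle).2⟩) x hx



/-- One-step (local) error bound for Simpson's rule — equivalently,
the local truncation error of one step of the classical fourth-order Runge–Kutta
method applied to y′ = f(t): if f is C⁴ on [a, a+h] with |f⁗| ≤ M there, then
|∫_a^{a+h} f − (h/6)(f(a) + 4f(a+h/2) + f(a+h))| ≤ M h⁵ / 2880. -/
theorem simpson_one_step_error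
    (a h : ℝ) (hh : 0 < h) (f : ℝ → ℝ)
    (hf : ContDiffOn ℝ 4 f (Set.Icc a (a + h)))
    (M : ℝ)
    (hM : ∀ t ∈ Set.Icc a (a + h),
      |iteratedDerivWithin 4 f (Set.Icc a (a + h)) t| ≤ M) :
    |(∫ t in a..(a + h), f t)
        - (h / 6) * (f a + 4 * f (a + h / 2) + f (a + h))|
      ≤ M * h ^ 5 / 2880 := by
  have hab : a < a + h := by linarith
  set s : Set ℝ := Set.Icc a (a + h) with hsdef
  have hud : UniqueDiffOn ℝ s := uniqueDiffOn_Icc hab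
  set c : ℝ := a + h / 2 with hcdef
  set r : ℝ := h / 2 with hrdef
  have hr : 0 < r := by positivity
  set F1 := iteratedDerivWithin 1 f s with hF1def
  set F2 := iteratedDerivWithin 2 f s with hF2def
  set F3 := iteratedDerivWithin 3 f s with hF3def
  set F4 := iteratedDerivWithin 4 f s with hF4def
  -- continuity of iterated derivatives
  have hc0 : ContinuousOn f s := hf.continuousOn
  have hc1 : ContinuousOn F1 s := hf.continuousOn_iteratedDerivWithin (by norm_num) hud
  have hc2 : ContinuousOn F2 s := hf.continuousOn_iteratedDerivWithin (by norm_num) hud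
  -- derivative facts at interior points
  have key : ∀ j : ℕ, j < 4 → ∀ y ∈ Set.Ioo a (a + h),
      HasDerivAt (iteratedDerivWithin j f s) (iteratedDerivWithin (j + 1) f s y) y := by
    intro j hj y hy
    have hy' : y ∈ s := Set.Ioo_subset_Icc_self hy
    have hmem : s ∈ nhds y := Icc_mem_nhds hy.1 hy.2
    have hd : DifferentiableWithinAt ℝ (iteratedDerivWithin j f s) s y :=
      hf.differentiableOn_iteratedDerivWithin (by exact_mod_cast hj) hud y hy'
    have h1 := (hd.differentiableAt hmem).hasDerivAt
    rwa [iteratedDerivWithin_succ, derivWithin_of_mem_nhds hmem]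
  have hF0 : iteratedDerivWithin 0 f s = f := iteratedDerivWithin_zero
  have keyf : ∀ y ∈ Set.Ioo a (a + h), HasDerivAt f (F1 y) y := by
    intro y hy
    have := key 0 (by norm_num) y hy
    rwa [hF0] at this
  have key1 : ∀ y ∈ Set.Ioo a (a + h), HasDerivAt F1 (F2 y) y :=
    fun y hy => key 1 (by norm_num) y hy
  have key2 : ∀ y ∈ Set.Ioo a (a + h), HasDerivAt F2 (F3 y) y :=
    fun y hy => key 2 (by norm_num) y hy
  -- membership helpers
  have memp : ∀ x ∈ Set.Ioo (0:ℝ) r, c + x ∈ Set.Ioo a (a + h) := by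
    intro x hx
    constructor <;> [skip; skip] <;> simp only [hcdef] <;>
      [linarith [hx.1, hr]; linarith [hx.2]]
  have memm : ∀ x ∈ Set.Ioo (0:ℝ) r, c - x ∈ Set.Ioo a (a + h) := by
    intro x hx
    constructor <;> simp only [hcdef] <;> [linarith [hx.2]; linarith [hx.1, hh]]
  have mempc : ∀ x ∈ Set.Icc (0:ℝ) r, c + x ∈ s := by
    intro x hx
    simp only [hsdef, Set.mem_Icc, hcdef]
    constructor <;> linarith [hx.1, hx.2]
  have memmc : ∀ x ∈ Set.Icc (0:ℝ) r, c - x ∈ s := by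
    intro x hx
    simp only [hsdef, Set.mem_Icc, hcdef]
    constructor <;> linarith [hx.1, hx.2]
  -- the primitive
  set G1 : ℝ → ℝ := fun u => ∫ t in a..u, f t with hG1def
  have hG1cont : ContinuousOn G1 s := by
    have := intervalIntegral.continuousOn_primitive_interval'
      (μ := MeasureTheory.volume) (f := f) (b₁ := a) (b₂ := a + h) (a := a)
      (by apply ContinuousOn.intervalIntegrable; rwa [Set.uIcc_of_le hab.le])
      (by rw [Set.uIcc_of_le hab.le]; exact Set.left_mem_Icc.mpr hab.le)
    rwa [Set.uIcc_of_le hab.le] at this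
  have hG1deriv : ∀ y ∈ Set.Ioo a (a + h), HasDerivAt G1 (f y) y := by
    intro y hy
    apply intervalIntegral.integral_hasDerivAt_right
    · apply ContinuousOn.intervalIntegrable
      apply hc0.mono
      rw [Set.uIcc_of_le hy.1.le]
      exact Set.Icc_subset_Icc le_rfl hy.2.le
    · exact (hc0.mono Set.Ioo_subset_Icc_self).stronglyMeasurableAtFilter isOpen_Ioo y hy
    · exact hc0.continuousAt (Icc_mem_nhds hy.1 hy.2)
  -- the three auxiliary functions
  set g0 : ℝ → ℝ := fun x => (G1 (c + x) - G1 (c - x))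
      - x / 3 * (f (c - x) + 4 * f c + f (c + x)) with hg0def
  set g1 : ℝ → ℝ := fun x => 2 / 3 * (f (c + x) + f (c - x)) - 4 / 3 * f c
      - x / 3 * (F1 (c + x) - F1 (c - x)) with hg1def
  set g2 : ℝ → ℝ := fun x => 1 / 3 * (F1 (c + x) - F1 (c - x))
      - x / 3 * (F2 (c + x) + F2 (c - x)) with hg2def
  -- continuity of compositions
  have hplus : ContinuousOn (fun x : ℝ => c + x) (Set.Icc 0 r) :=
    (continuous_const.add continuous_id).continuousOn
  have hminus : ContinuousOn (fun x : ℝ => c - x) (Set.Icc 0 r) :=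
    (continuous_const.sub continuous_id).continuousOn
  have comp_cont : ∀ (F : ℝ → ℝ), ContinuousOn F s →
      ContinuousOn (fun x => F (c + x)) (Set.Icc 0 r) ∧
      ContinuousOn (fun x => F (c - x)) (Set.Icc 0 r) := by
    intro F hF
    exact ⟨hF.comp hplus mempc, hF.comp hminus memmc⟩
  have hg0cont : ContinuousOn g0 (Set.Icc 0 r) := by
    have hG := comp_cont G1 hG1cont
    have hfc := comp_cont f hc0
    exact ((hG.1.sub hG.2).sub
      ((continuousOn_id.div_const 3).mul ((hfc.2.add continuousOn_const).add hfc.1)))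
  have hg1cont : ContinuousOn g1 (Set.Icc 0 r) := by
    have hfc := comp_cont f hc0
    have hF1c := comp_cont F1 hc1
    exact ((continuousOn_const.mul (hfc.1.add hfc.2)).sub continuousOn_const).sub
      ((continuousOn_id.div_const 3).mul (hF1c.1.sub hF1c.2))
  have hg2cont : ContinuousOn g2 (Set.Icc 0 r) := by
    have hF1c := comp_cont F1 hc1
    have hF2c := comp_cont F2 hc2
    exact (continuousOn_const.mul (hF1c.1.sub hF1c.2)).sub
      ((continuousOn_id.div_const 3).mul (hF2c.1.add hF2c.2))
  -- derivatives of compositions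
  have dplus : ∀ x : ℝ, HasDerivAt (fun y : ℝ => c + y) 1 x :=
    fun x => (hasDerivAt_id x).const_add c
  have dminus : ∀ x : ℝ, HasDerivAt (fun y : ℝ => c - y) (-1) x :=
    fun x => (hasDerivAt_id x).const_sub c
  -- derivative of g0 is g1
  have hg0d : ∀ x ∈ Set.Ioo (0:ℝ) r, HasDerivAt g0 (g1 x) x := by
    intro x hx
    have hp := memp x hx
    have hm := memm x hx
    have h1 : HasDerivAt (fun y => G1 (c + y)) (f (c + x) * 1) x :=
      (hG1deriv _ hp).comp x (dplus x)
    have h2 : HasDerivAt (fun y => G1 (c - y)) (f (c - x) * (-1)) x :=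
      (hG1deriv _ hm).comp x (dminus x)
    have h3 : HasDerivAt (fun y => f (c - y)) (F1 (c - x) * (-1)) x :=
      (keyf _ hm).comp x (dminus x)
    have h4 : HasDerivAt (fun y => f (c + y)) (F1 (c + x) * 1) x :=
      (keyf _ hp).comp x (dplus x)
    have h5 : HasDerivAt (fun y : ℝ => y / 3) (1 / 3) x := (hasDerivAt_id x).div_const 3
    have h6 := (h5.mul ((h3.add (hasDerivAt_const x (4 * f c))).add h4))
    have H := (h1.sub h2).sub h6
    refine H.congr_deriv ?_
    simp only [hg1def, Pi.add_apply]
    ring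
  -- derivative of g1 is g2
  have hg1d : ∀ x ∈ Set.Ioo (0:ℝ) r, HasDerivAt g1 (g2 x) x := by
    intro x hx
    have hp := memp x hx
    have hm := memm x hx
    have h3 : HasDerivAt (fun y => f (c - y)) (F1 (c - x) * (-1)) x :=
      (keyf _ hm).comp x (dminus x)
    have h4 : HasDerivAt (fun y => f (c + y)) (F1 (c + x) * 1) x :=
      (keyf _ hp).comp x (dplus x)
    have h3' : HasDerivAt (fun y => F1 (c - y)) (F2 (c - x) * (-1)) x :=
      (key1 _ hm).comp x (dminus x)
    have h4' : HasDerivAt (fun y => F1 (c + y)) (F2 (c + x) * 1) x :=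
      (key1 _ hp).comp x (dplus x)
    have h5 : HasDerivAt (fun y : ℝ => y / 3) (1 / 3) x := (hasDerivAt_id x).div_const 3
    have H := (((h4.add h3).const_mul (2/3 : ℝ)).sub (hasDerivAt_const x (4 / 3 * f c))).sub
      (h5.mul (h4'.sub h3'))
    refine H.congr_deriv ?_
    simp only [hg2def, Pi.sub_apply]
    ring
  -- derivative of g2 and its bound
  have hM0 : 0 ≤ M := le_trans (abs_nonneg _) (hM a ⟨le_refl a, by linarith⟩)
  have hmvt : ∀ x ∈ Set.Ioo (0:ℝ) r, |F3 (c + x) - F3 (c - x)| ≤ M * (2 * x) := by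
    intro x hx
    have hdw : ∀ t ∈ s, HasDerivWithinAt F3 (F4 t) s t := by
      intro t ht
      have hd := (hf.differentiableOn_iteratedDerivWithin (n := 4) (m := 3)
        (by norm_num) hud t ht).hasDerivWithinAt
      have he : F4 t = derivWithin F3 s t := congrFun iteratedDerivWithin_succ t
      rwa [← he] at hd
    have := (convex_Icc a (a + h)).norm_image_sub_le_of_norm_hasDerivWithin_le
      hdw (fun t ht => by simpa using hM t ht) (memmc x (Set.Ioo_subset_Icc_self hx))
      (mempc x (Set.Ioo_subset_Icc_self hx))
    have he : ‖c + x - (c - x)‖ = 2 * x := by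
      rw [Real.norm_eq_abs, abs_of_nonneg (by linarith [hx.1])]; ring
    rw [Real.norm_eq_abs, he] at this
    exact this
  have hg2d : ∀ x ∈ Set.Ioo (0:ℝ) r, ∃ u', HasDerivAt g2 u' x ∧ |u'| ≤ 2 * M / 3 * x ^ 2 := by
    intro x hx
    have hp := memp x hx
    have hm := memm x hx
    have h3' : HasDerivAt (fun y => F1 (c - y)) (F2 (c - x) * (-1)) x :=
      (key1 _ hm).comp x (dminus x)
    have h4' : HasDerivAt (fun y => F1 (c + y)) (F2 (c + x) * 1) x :=
      (key1 _ hp).comp x (dplus x)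
    have h3'' : HasDerivAt (fun y => F2 (c - y)) (F3 (c - x) * (-1)) x :=
      (key2 _ hm).comp x (dminus x)
    have h4'' : HasDerivAt (fun y => F2 (c + y)) (F3 (c + x) * 1) x :=
      (key2 _ hp).comp x (dplus x)
    have h5 : HasDerivAt (fun y : ℝ => y / 3) (1 / 3) x := (hasDerivAt_id x).div_const 3
    have H := ((h4'.sub h3').const_mul (1/3 : ℝ)).sub (h5.mul (h4''.add h3''))
    refine ⟨-(x / 3) * (F3 (c + x) - F3 (c - x)), ?_, ?_⟩
    · refine H.congr_deriv ?_; simp only [Pi.add_apply]; ring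
    · rw [abs_mul, abs_neg, abs_of_nonneg (by linarith [hx.1] : (0:ℝ) ≤ x / 3)]
      calc x / 3 * |F3 (c + x) - F3 (c - x)| ≤ x / 3 * (M * (2 * x)) := by
            apply mul_le_mul_of_nonneg_left (hmvt x hx) (by linarith [hx.1])
        _ = 2 * M / 3 * x ^ 2 := by ring
  -- values at 0
  have hg0z : g0 0 = 0 := by simp [hg0def]
  have hg1z : g1 0 = 0 := by simp only [hg1def, add_zero, sub_zero]; ring
  have hg2z : g2 0 = 0 := by simp only [hg2def, add_zero, sub_zero]; ring
  -- chain of bounds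
  have b2 := simpson_aux r (2 * M / 3) 2 g2 hg2cont hg2z hg2d
  have b2' : ∀ x ∈ Set.Icc (0:ℝ) r, |g2 x| ≤ 2 * M / 9 * x ^ 3 := by
    intro x hx
    have := b2 x hx
    norm_num at this
    linarith
  have b1 := simpson_aux r (2 * M / 9) 3 g1 hg1cont hg1z
    (fun x hx => ⟨g2 x, hg1d x hx, b2' x (Set.Ioo_subset_Icc_self hx)⟩)
  have b1' : ∀ x ∈ Set.Icc (0:ℝ) r, |g1 x| ≤ M / 18 * x ^ 4 := by
    intro x hx
    have := b1 x hx
    norm_num at this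
    linarith
  have b0 := simpson_aux r (M / 18) 4 g0 hg0cont hg0z
    (fun x hx => ⟨g1 x, hg0d x hx, b1' x (Set.Ioo_subset_Icc_self hx)⟩)
  have b0' : |g0 r| ≤ M / 18 / (4 + 1) * r ^ 5 := by
    have := b0 r ⟨hr.le, le_refl r⟩
    norm_num at this ⊢
    linarith
  -- conclude
  have hcr1 : c + r = a + h := by rw [hcdef, hrdef]; ring
  have hcr2 : c - r = a := by rw [hcdef, hrdef]; ring
  have hval : g0 r = (∫ t in a..(a + h), f t)
      - h / 6 * (f a + 4 * f (a + h / 2) + f (a + h)) := by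
    simp only [hg0def, hcr1, hcr2, hG1def, intervalIntegral.integral_same, sub_zero]
    rw [hrdef, hcdef]
    ring
  rw [← hval]
  calc |g0 r| ≤ M / 18 / (4 + 1) * r ^ 5 := b0'
    _ = M * h ^ 5 / 2880 := by rw [hrdef]; ring
end

section
/- Let s ∈ (0, 1), let f₁, f₂ : ℝ → ℝ each be 4-times continuously differentiable on [0, 1] with f₁(s) = f₂(s) and f₁′(s) = f₂′(s), and define f : [0, 1] → ℝ by f(t) = f₁(t) for t ≤ s and f(t) = f₂(t) for t > s. Let N be a positive integer, h = 1/N, t_n = n·h, and define the composite Simpson sum S_N(f) = Σ_{n=0}^{N−1} (h/6)·(f(t_n) + 4f(t_n + h/2) + f(t_{n+1})). Then |∫_0^1 f(t) dt − S_N(f)| ≤ M·h⁴ / 2880 + K·h³, where M = max(sup_{[0,1]} |f₁⁗|, sup_{[0,1]} |f₂⁗|) and K = sup_{t ∈ [0,1]} |f₁″(t) − f₂″(t)|. -/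
open Set MeasureTheory intervalIntegral

lemma bound_step (T C : ℝ) (k : ℕ) (F F' : ℝ → ℝ)
    (hF : ∀ t ∈ Icc (0:ℝ) T, HasDerivWithinAt F (F' t) (Icc 0 T) t)
    (hF'c : ContinuousOn F' (Icc 0 T))
    (h0 : F 0 = 0)
    (hbd : ∀ t ∈ Icc (0:ℝ) T, |F' t| ≤ C * t ^ k) :
    ∀ t ∈ Icc (0:ℝ) T, |F t| ≤ C * t ^ (k+1) / (k+1) := by
  intro t ht
  obtain ⟨ht0, htT⟩ := ht
  have hsub : Icc (0:ℝ) t ⊆ Icc 0 T := Icc_subset_Icc le_rfl htT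
  have hFt : F t - F 0 = ∫ u in (0:ℝ)..t, F' u := by
    rw [intervalIntegral.integral_eq_sub_of_hasDeriv_right_of_le ht0
      (fun x hx => (hF x (hsub hx)).continuousWithinAt.mono hsub)
      (fun x hx => by
        have hmem : Icc (0:ℝ) T ∈ nhds x := by
          refine Icc_mem_nhds hx.1 (lt_of_lt_of_le hx.2 htT)
        exact ((hF x (hsub (Ioo_subset_Icc_self hx))).hasDerivAt hmem).hasDerivWithinAt
      )
      ((hF'c.mono hsub).intervalIntegrable_of_Icc ht0)]
  have hint1 : IntervalIntegrable F' volume 0 t :=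
    (hF'c.mono hsub).intervalIntegrable_of_Icc ht0
  have habs : |∫ u in (0:ℝ)..t, F' u| ≤ ∫ u in (0:ℝ)..t, |F' u| :=
    intervalIntegral.abs_integral_le_integral_abs ht0
  have hmono : (∫ u in (0:ℝ)..t, |F' u|) ≤ ∫ u in (0:ℝ)..t, C * u ^ k := by
    apply intervalIntegral.integral_mono_on ht0 hint1.abs
    · exact (continuous_const.mul (continuous_pow k)).intervalIntegrable _ _
    · intro u hu; exact hbd u (hsub hu)
  have hval : (∫ u in (0:ℝ)..t, C * u ^ k) = C * t ^ (k+1) / (k+1) := by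
    rw [intervalIntegral.integral_const_mul, integral_pow]
    simp
    ring
  rw [h0, sub_zero] at hFt
  rw [hFt]
  calc |∫ u in (0:ℝ)..t, F' u| ≤ ∫ u in (0:ℝ)..t, |F' u| := habs
    _ ≤ ∫ u in (0:ℝ)..t, C * u ^ k := hmono
    _ = C * t ^ (k+1) / (k+1) := hval

lemma simpson_error (g : ℝ → ℝ) (hg : ContDiffOn ℝ 4 g (Icc 0 1))
    (a b : ℝ) (ha : a ∈ Icc (0:ℝ) 1) (hb : b ∈ Icc (0:ℝ) 1) (hab : a ≤ b)
    (M : ℝ) (hM : ∀ t ∈ Icc (0:ℝ) 1, |iteratedDerivWithin 4 g (Icc 0 1) t| ≤ M) :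
    |(∫ t in a..b, g t) - ((b-a)/6) * (g a + 4 * g ((a+b)/2) + g b)|
      ≤ M * (b-a)^5 / 2880 := by
  have uD : UniqueDiffOn ℝ (Icc (0:ℝ) 1) := uniqueDiffOn_Icc one_pos
  set D := Icc (0:ℝ) 1 with hD
  have hsubD : Icc a b ⊆ D := Icc_subset_Icc ha.1 hb.2
  set G : ℕ → ℝ → ℝ := fun k => iteratedDerivWithin k g D with hGdef
  have hG0 : ∀ x, G 0 x = g x := fun x => by
    simp [hGdef, iteratedDerivWithin_zero]
  have hder : ∀ k, k < 4 → ∀ x ∈ D, HasDerivWithinAt (G k) (G (k+1) x) D x := by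
    intro k hk x hx
    have hdiff := hg.differentiableOn_iteratedDerivWithin
      (show (k : WithTop ℕ∞) < 4 by exact_mod_cast hk) uD
    have h1 := (hdiff x hx).hasDerivWithinAt
    have h2 : G (k+1) x = derivWithin (G k) D x := congrFun iteratedDerivWithin_succ x
    rw [h2]; exact h1
  have hcont : ∀ k : ℕ, k ≤ 4 → ContinuousOn (G k) D := fun k hk =>
    hg.continuousOn_iteratedDerivWithin (by exact_mod_cast hk) uD
  -- extension of g for FTC
  set gext : ℝ → ℝ := fun x => g (min 1 (max 0 x)) with hgextdef
  have hproj : Continuous fun x : ℝ => min 1 (max 0 x) :=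
    (continuous_const.min (continuous_const.max continuous_id))
  have hmemproj : ∀ x : ℝ, min 1 (max 0 x) ∈ D := fun x =>
    ⟨le_min zero_le_one (le_max_left 0 x), min_le_left 1 _⟩
  have hgext_cont : Continuous gext := by
    have := hg.continuousOn.comp_continuous hproj hmemproj
    simpa [hgextdef, Function.comp_def] using this
  have hgext_eq : ∀ x ∈ D, gext x = g x := by
    intro x hx
    have h1 : max 0 x = x := max_eq_right hx.1
    have h2 : min 1 x = x := min_eq_right hx.2
    simp [hgextdef, h1, h2]
  set Φ : ℝ → ℝ := fun u => ∫ x in a..u, gext x with hΦdef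
  have hΦ : ∀ y : ℝ, HasDerivAt Φ (gext y) y := fun y =>
    intervalIntegral.integral_hasDerivAt_right (hgext_cont.intervalIntegrable a y)
      (hgext_cont.stronglyMeasurableAtFilter volume (nhds y)) hgext_cont.continuousAt
  set m := (a+b)/2 with hm
  set T := (b-a)/2 with hT
  have hT0 : 0 ≤ T := by rw [hT]; linarith
  set S := Icc (0:ℝ) T with hS
  have hmemp : ∀ t ∈ S, m + t ∈ Icc a b := by
    intro t ht
    simp only [hS, mem_Icc] at ht
    rw [hT] at ht
    rw [hm, mem_Icc]
    constructor <;> linarith [ht.1, ht.2]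
  have hmemm : ∀ t ∈ S, m - t ∈ Icc a b := by
    intro t ht
    simp only [hS, mem_Icc] at ht
    rw [hT] at ht
    rw [hm, mem_Icc]
    constructor <;> linarith [ht.1, ht.2]
  have hmD : m ∈ D := hsubD (by rw [hm, mem_Icc]; constructor <;> linarith)
  -- derivative of composed pieces
  have hp : ∀ k, k < 4 → ∀ t ∈ S, HasDerivWithinAt (fun t => G k (m + t)) (G (k+1) (m+t)) S t := by
    intro k hk t ht
    have h2 : HasDerivWithinAt (fun t : ℝ => m + t) 1 S t := by
      simpa using (hasDerivWithinAt_id t S).const_add m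
    have := (hder k hk (m+t) (hsubD (hmemp t ht))).comp t h2
      (fun u hu => hsubD (hmemp u hu))
    simpa [Function.comp_def] using this
  have hmn : ∀ k, k < 4 → ∀ t ∈ S, HasDerivWithinAt (fun t => G k (m - t)) (-(G (k+1) (m-t))) S t := by
    intro k hk t ht
    have h2 : HasDerivWithinAt (fun t : ℝ => m - t) (-1) S t := by
      simpa using (hasDerivWithinAt_id t S).const_sub m
    have := (hder k hk (m-t) (hsubD (hmemm t ht))).comp t h2
      (fun u hu => hsubD (hmemm u hu))
    simpa [Function.comp_def] using this
  have hΦp : ∀ t ∈ S, HasDerivWithinAt (fun t => Φ (m + t)) (G 0 (m+t)) S t := by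
    intro t ht
    have h2 : HasDerivWithinAt (fun t : ℝ => m + t) 1 S t := by
      simpa using (hasDerivWithinAt_id t S).const_add m
    have := (hΦ (m+t)).comp_hasDerivWithinAt t h2
    have heq : gext (m+t) = G 0 (m+t) := by
      rw [hgext_eq _ (hsubD (hmemp t ht)), hG0]
    simpa [heq, Function.comp_def] using this
  have hΦm : ∀ t ∈ S, HasDerivWithinAt (fun t => Φ (m - t)) (-(G 0 (m-t))) S t := by
    intro t ht
    have h2 : HasDerivWithinAt (fun t : ℝ => m - t) (-1) S t := by
      simpa using (hasDerivWithinAt_id t S).const_sub m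
    have := (hΦ (m-t)).comp_hasDerivWithinAt t h2
    have heq : gext (m-t) = G 0 (m-t) := by
      rw [hgext_eq _ (hsubD (hmemm t ht)), hG0]
    simpa [heq, Function.comp_def] using this
  -- the error functions
  set E0 : ℝ → ℝ := fun t => Φ (m+t) - Φ (m-t)
    - (t/3) * (G 0 (m-t) + 4 * G 0 m + G 0 (m+t)) with hE0def
  set E1 : ℝ → ℝ := fun t => (2/3) * (G 0 (m+t) + G 0 (m-t)) - (4/3) * G 0 m
    - (t/3) * (G 1 (m+t) - G 1 (m-t)) with hE1def
  set E2 : ℝ → ℝ := fun t => (1/3) * (G 1 (m+t) - G 1 (m-t))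
    - (t/3) * (G 2 (m+t) + G 2 (m-t)) with hE2def
  set E3 : ℝ → ℝ := fun t => -(t/3) * (G 3 (m+t) - G 3 (m-t)) with hE3def
  have hdiv : ∀ t ∈ S, HasDerivWithinAt (fun t : ℝ => t/3) (1/3) S t := by
    intro t ht
    simpa using (hasDerivWithinAt_id t S).div_const 3
  have hE0d : ∀ t ∈ S, HasDerivWithinAt E0 (E1 t) S t := by
    intro t ht
    have hbr : HasDerivWithinAt (fun t => G 0 (m-t) + 4 * G 0 m + G 0 (m+t))
        (-(G 1 (m-t)) + G 1 (m+t)) S t := by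
      simpa [Pi.add_def] using ((hmn 0 (by norm_num) t ht).add_const (4 * G 0 m)).add
        (hp 0 (by norm_num) t ht)
    have := ((hΦp t ht).sub (hΦm t ht)).sub ((hdiv t ht).mul hbr)
    rw [hE0def, hE1def]
    exact this.congr_deriv (by ring)
  have hE1d : ∀ t ∈ S, HasDerivWithinAt E1 (E2 t) S t := by
    intro t ht
    have h1 := (((hp 0 (by norm_num) t ht).add (hmn 0 (by norm_num) t ht)).const_mul
      ((2:ℝ)/3)).sub_const ((4/3) * G 0 m)
    have h2 := (hdiv t ht).mul ((hp 1 (by norm_num) t ht).sub (hmn 1 (by norm_num) t ht))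
    have := h1.sub h2
    rw [hE1def, hE2def]
    exact this.congr_deriv (by simp only [Pi.add_apply, Pi.sub_apply]; ring)
  have hE2d : ∀ t ∈ S, HasDerivWithinAt E2 (E3 t) S t := by
    intro t ht
    have h1 := ((hp 1 (by norm_num) t ht).sub (hmn 1 (by norm_num) t ht)).const_mul ((1:ℝ)/3)
    have h2 := (hdiv t ht).mul ((hp 2 (by norm_num) t ht).add (hmn 2 (by norm_num) t ht))
    have := h1.sub h2
    rw [hE2def, hE3def]
    exact this.congr_deriv (by simp only [Pi.add_apply, Pi.sub_apply]; ring)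
  -- bound on E3
  have hG3lip : ∀ x ∈ D, ∀ y ∈ D, |G 3 x - G 3 y| ≤ M * |x - y| := by
    intro x hx y hy
    have hdiff3 : DifferentiableOn ℝ (G 3) D :=
      hg.differentiableOn_iteratedDerivWithin (by norm_num) uD
    have hbd4 : ∀ z ∈ D, ‖derivWithin (G 3) D z‖ ≤ M := by
      intro z hz
      have : derivWithin (G 3) D z = G 4 z := (congrFun iteratedDerivWithin_succ z).symm
      rw [this]
      simpa using hM z hz
    simpa using Convex.norm_image_sub_le_of_norm_derivWithin_le hdiff3 hbd4 (convex_Icc 0 1) hy hx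
  have hE3bd : ∀ t ∈ S, |E3 t| ≤ (2*M/3) * t ^ 2 := by
    intro t ht
    have ht0 : 0 ≤ t := by
      simp only [hS, mem_Icc] at ht; exact ht.1
    have hlip := hG3lip (m+t) (hsubD (hmemp t ht)) (m-t) (hsubD (hmemm t ht))
    have habs2 : |m + t - (m - t)| = 2 * t := by
      rw [abs_of_nonneg (by linarith)]; ring
    rw [habs2] at hlip
    rw [hE3def]
    have : |(-(t/3)) * (G 3 (m+t) - G 3 (m-t))| = (t/3) * |G 3 (m+t) - G 3 (m-t)| := by
      rw [abs_mul, abs_neg, abs_of_nonneg (by linarith : (0:ℝ) ≤ t/3)]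
    rw [this]
    calc (t/3) * |G 3 (m+t) - G 3 (m-t)| ≤ (t/3) * (M * (2*t)) := by
          apply mul_le_mul_of_nonneg_left hlip (by linarith)
      _ = (2*M/3) * t ^ 2 := by ring
  -- continuity of E3
  have hE3cont : ContinuousOn E3 S := by
    have hc3 : ContinuousOn (G 3) D := hcont 3 (by norm_num)
    have hcp : ContinuousOn (fun t => G 3 (m+t)) S :=
      hc3.comp (continuous_const.add continuous_id).continuousOn
        (fun t ht => hsubD (hmemp t ht))
    have hcm : ContinuousOn (fun t => G 3 (m-t)) S :=
      hc3.comp (continuous_const.sub continuous_id).continuousOn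
        (fun t ht => hsubD (hmemm t ht))
    rw [hE3def]
    exact ((continuousOn_id.div_const 3).neg.mul (hcp.sub hcm))
  -- chain of bounds
  have hE2z : E2 0 = 0 := by simp [hE2def]
  have hE1z : E1 0 = 0 := by simp [hE1def]; ring
  have hE0z : E0 0 = 0 := by simp [hE0def]
  have hb2 : ∀ t ∈ S, |E2 t| ≤ (2*M/9) * t ^ 3 := by
    intro t ht
    have := bound_step T (2*M/3) 2 E2 E3 hE2d hE3cont hE2z hE3bd t ht
    calc |E2 t| ≤ (2*M/3) * t ^ (2+1) / (2+1) := this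
      _ = (2*M/9) * t ^ 3 := by norm_num; ring
  have hE2cont : ContinuousOn E2 S := fun t ht => (hE2d t ht).continuousWithinAt
  have hb1 : ∀ t ∈ S, |E1 t| ≤ (M/18) * t ^ 4 := by
    intro t ht
    have := bound_step T (2*M/9) 3 E1 E2 hE1d hE2cont hE1z hb2 t ht
    calc |E1 t| ≤ (2*M/9) * t ^ (3+1) / (3+1) := this
      _ = (M/18) * t ^ 4 := by norm_num; ring
  have hE1cont : ContinuousOn E1 S := fun t ht => (hE1d t ht).continuousWithinAt
  have hb0 : |E0 T| ≤ (M/18) * T ^ 5 / 5 := by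
    have := bound_step T (M/18) 4 E0 E1 hE0d hE1cont hE0z hb1 T ⟨hT0, le_rfl⟩
    norm_num at this
    exact this
  -- identify E0 T with the Simpson error
  have hbT : m + T = b := by rw [hm, hT]; ring
  have haT : m - T = a := by rw [hm, hT]; ring
  have hint_eq : Φ b - Φ a = ∫ t in a..b, g t := by
    have h1 : Φ a = 0 := by rw [hΦdef]; simp
    have h2 : Φ b = ∫ t in a..b, g t := by
      rw [hΦdef]
      apply intervalIntegral.integral_congr
      intro x hx
      rw [uIcc_of_le hab] at hx
      exact hgext_eq x (hsubD hx)
    rw [h1, h2, sub_zero]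
  have hE0T : E0 T = (∫ t in a..b, g t) - ((b-a)/6) * (g a + 4 * g ((a+b)/2) + g b) := by
    simp only [hE0def, hbT, haT, hG0]
    rw [hint_eq, hm, hT]
    ring
  calc |(∫ t in a..b, g t) - ((b-a)/6) * (g a + 4 * g ((a+b)/2) + g b)|
      = |E0 T| := by rw [hE0T]
    _ ≤ (M/18) * T ^ 5 / 5 := hb0
    _ = M * (b-a)^5 / 2880 := by rw [hT]; ring

lemma quad_bound (φ : ℝ → ℝ) (hφ : ContDiffOn ℝ 2 φ (Icc 0 1)) (s : ℝ) (hs : s ∈ Icc (0:ℝ) 1)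
    (h0 : φ s = 0) (h1 : derivWithin φ (Icc 0 1) s = 0) (K : ℝ)
    (hK : ∀ t ∈ Icc (0:ℝ) 1, |iteratedDerivWithin 2 φ (Icc 0 1) t| ≤ K) :
    ∀ t ∈ Icc (0:ℝ) 1, s ≤ t → |φ t| ≤ K * (t-s)^2 / 2 := by
  have uD : UniqueDiffOn ℝ (Icc (0:ℝ) 1) := uniqueDiffOn_Icc one_pos
  set D := Icc (0:ℝ) 1 with hD
  set G : ℕ → ℝ → ℝ := fun k => iteratedDerivWithin k φ D with hGdef
  have hG0 : ∀ x, G 0 x = φ x := fun x => by simp [hGdef]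
  have hder : ∀ k, k < 2 → ∀ x ∈ D, HasDerivWithinAt (G k) (G (k+1) x) D x := by
    intro k hk x hx
    have hdiff := hφ.differentiableOn_iteratedDerivWithin
      (show (k : WithTop ℕ∞) < 2 by exact_mod_cast hk) uD
    have h2 : G (k+1) x = derivWithin (G k) D x := congrFun iteratedDerivWithin_succ x
    rw [h2]; exact (hdiff x hx).hasDerivWithinAt
  have hcont2 : ContinuousOn (G 2) D :=
    hφ.continuousOn_iteratedDerivWithin (le_refl _) uD
  set T1 := 1 - s with hT1
  have hsubS : ∀ u ∈ Icc (0:ℝ) T1, s + u ∈ D := by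
    intro u hu
    simp only [mem_Icc] at hu
    rw [hT1] at hu
    rw [hD, mem_Icc]
    have := hs.1
    constructor <;> linarith [hu.1, hu.2]
  have hFd : ∀ k, k < 2 → ∀ u ∈ Icc (0:ℝ) T1,
      HasDerivWithinAt (fun u => G k (s+u)) (G (k+1) (s+u)) (Icc 0 T1) u := by
    intro k hk u hu
    have h2 : HasDerivWithinAt (fun u : ℝ => s + u) 1 (Icc 0 T1) u := by
      simpa using (hasDerivWithinAt_id u (Icc 0 T1)).const_add s
    have := (hder k hk (s+u) (hsubS u hu)).comp u h2 hsubS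
    simpa [Function.comp_def] using this
  have hF2cont : ContinuousOn (fun u => G 2 (s+u)) (Icc (0:ℝ) T1) :=
    hcont2.comp (continuous_const.add continuous_id).continuousOn hsubS
  have hF1z : G 1 (s + 0) = 0 := by
    rw [add_zero]
    show iteratedDerivWithin 1 φ D s = 0
    rw [iteratedDerivWithin_one]
    exact h1
  have hstep1 : ∀ u ∈ Icc (0:ℝ) T1, |G 1 (s+u)| ≤ K * u ^ 1 := by
    intro u hu
    have := bound_step T1 K 0 (fun u => G 1 (s+u)) (fun u => G 2 (s+u))
      (hFd 1 (by norm_num)) hF2cont hF1z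
      (fun u hu => by simpa using hK (s+u) (hsubS u hu)) u hu
    simpa using this
  have hF1cont : ContinuousOn (fun u => G 1 (s+u)) (Icc (0:ℝ) T1) :=
    fun u hu => (hFd 1 (by norm_num) u hu).continuousWithinAt
  have hF0z : G 0 (s + 0) = 0 := by rw [add_zero, hG0]; exact h0
  have hstep2 : ∀ u ∈ Icc (0:ℝ) T1, |G 0 (s+u)| ≤ K * u ^ 2 / 2 := by
    intro u hu
    have := bound_step T1 K 1 (fun u => G 0 (s+u)) (fun u => G 1 (s+u))
      (hFd 0 (by norm_num)) hF1cont hF0z hstep1 u hu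
    norm_num at this
    exact this
  intro t ht hst
  have hu : t - s ∈ Icc (0:ℝ) T1 := by
    rw [hT1, mem_Icc]
    constructor
    · linarith
    · linarith [ht.2]
  have := hstep2 (t - s) hu
  rw [show s + (t - s) = t by ring, hG0] at this
  exact this

/-- Composite Simpson's rule (equivalently, the fixed-step classical
RK4 solution of y′ = f(t), y(0) = 0 evaluated at t = 1) for a piecewise-C⁴
right-hand side with matching values and first derivatives at an arbitrary interior
breakpoint s: the error satisfies |∫₀¹ f − S_N(f)| ≤ M h⁴ / 2880 + K h³, where M
bounds the fourth derivatives of both pieces and K bounds the second-derivative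
discontinuity |f₁″ − f₂″| on [0, 1]. -/
theorem composite_simpson_second_derivative_jump
    (s : ℝ) (hs : s ∈ Set.Ioo (0 : ℝ) 1)
    (f₁ f₂ : ℝ → ℝ)
    (hf₁ : ContDiffOn ℝ 4 f₁ (Set.Icc 0 1))
    (hf₂ : ContDiffOn ℝ 4 f₂ (Set.Icc 0 1))
    (hval : f₁ s = f₂ s)
    (hval' : derivWithin f₁ (Set.Icc 0 1) s = derivWithin f₂ (Set.Icc 0 1) s)
    (f : ℝ → ℝ)
    (hfle : ∀ t ∈ Set.Icc (0 : ℝ) 1, t ≤ s → f t = f₁ t)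
    (hfgt : ∀ t ∈ Set.Icc (0 : ℝ) 1, s < t → f t = f₂ t)
    (N : ℕ) (hN : 0 < N) (h : ℝ) (hh : h = 1 / N)
    (M : ℝ)
    (hM₁ : ∀ t ∈ Set.Icc (0 : ℝ) 1,
      |iteratedDerivWithin 4 f₁ (Set.Icc 0 1) t| ≤ M)
    (hM₂ : ∀ t ∈ Set.Icc (0 : ℝ) 1,
      |iteratedDerivWithin 4 f₂ (Set.Icc 0 1) t| ≤ M)
    (K : ℝ)
    (hK : ∀ t ∈ Set.Icc (0 : ℝ) 1,
      |iteratedDerivWithin 2 f₁ (Set.Icc 0 1) t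
        - iteratedDerivWithin 2 f₂ (Set.Icc 0 1) t| ≤ K) :
    |(∫ t in (0 : ℝ)..1, f t)
        - ∑ n ∈ Finset.range N,
            (h / 6) * (f ((n : ℝ) * h) + 4 * f ((n : ℝ) * h + h / 2)
              + f (((n : ℝ) + 1) * h))|
      ≤ M * h ^ 4 / 2880 + K * h ^ 3 := by
  classical
  have uD : UniqueDiffOn ℝ (Set.Icc (0:ℝ) 1) := uniqueDiffOn_Icc one_pos
  have hNpos : (0:ℝ) < N := by exact_mod_cast hN
  have hhpos : 0 < h := by rw [hh]; positivity
  have hNh : (N:ℝ) * h = 1 := by rw [hh]; field_simp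
  have hgrid : ∀ n : ℕ, n ≤ N → (n:ℝ) * h ∈ Set.Icc (0:ℝ) 1 := by
    intro n hn
    constructor
    · positivity
    · calc (n:ℝ)*h ≤ (N:ℝ)*h := by
            apply mul_le_mul_of_nonneg_right _ hhpos.le
            exact_mod_cast hn
        _ = 1 := hNh
  have hK0 : 0 ≤ K := le_trans (abs_nonneg _) (hK 0 ⟨le_rfl, zero_le_one⟩)
  have hf1c : ContinuousOn f₁ (Set.Icc 0 1) := hf₁.continuousOn
  have hf2c : ContinuousOn f₂ (Set.Icc 0 1) := hf₂.continuousOn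
  have hsD : s ∈ Set.Icc (0:ℝ) 1 := ⟨hs.1.le, hs.2.le⟩
  have hab : ∀ n : ℕ, (n:ℝ)*h ≤ ((n:ℝ)+1)*h := by
    intro n
    have : ((n:ℝ)+1)*h = (n:ℝ)*h + h := by ring
    linarith
  have hsub : ∀ n : ℕ, n < N → Set.Icc ((n:ℝ)*h) (((n:ℝ)+1)*h) ⊆ Set.Icc (0:ℝ) 1 := by
    intro n hn
    apply Set.Icc_subset_Icc (hgrid n hn.le).1
    have := (hgrid (n+1) hn).2
    push_cast at this
    linarith
  have hfeq₂ : ∀ t ∈ Set.Icc (0:ℝ) 1, s ≤ t → f t = f₂ t := by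
    intro t ht hst
    rcases lt_or_eq_of_le hst with hlt | heq
    · exact hfgt t ht hlt
    · rw [← heq, hfle s hsD le_rfl, hval]
  -- integrability on each subinterval
  have hfint : ∀ n : ℕ, n < N → IntervalIntegrable f volume ((n:ℝ)*h) (((n:ℝ)+1)*h) := by
    intro n hn
    rw [intervalIntegrable_iff_integrableOn_Ioc_of_le (hab n)]
    have h1 : IntegrableOn f (Ioc ((n:ℝ)*h) (((n:ℝ)+1)*h) ∩ Iic s) volume := by
      apply IntegrableOn.congr_fun
        (f := f₁) ?_ ?_ ((measurableSet_Ioc).inter measurableSet_Iic)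
      · exact (hf1c.integrableOn_Icc).mono_set
          ((inter_subset_left.trans Ioc_subset_Icc_self).trans (hsub n hn))
      · intro t htm
        exact (hfle t (hsub n hn (Ioc_subset_Icc_self htm.1)) htm.2).symm
    have h2 : IntegrableOn f (Ioc ((n:ℝ)*h) (((n:ℝ)+1)*h) ∩ Ioi s) volume := by
      apply IntegrableOn.congr_fun
        (f := f₂) ?_ ?_ ((measurableSet_Ioc).inter measurableSet_Ioi)
      · exact (hf2c.integrableOn_Icc).mono_set
          ((inter_subset_left.trans Ioc_subset_Icc_self).trans (hsub n hn))
      · intro t htm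
        exact (hfgt t (hsub n hn (Ioc_subset_Icc_self htm.1)) htm.2).symm
    refine (h1.union h2).mono_set ?_
    intro t htm
    by_cases hts : t ≤ s
    · exact Or.inl ⟨htm, hts⟩
    · exact Or.inr ⟨htm, lt_of_not_ge hts⟩
  -- splitting the integral
  have hsplit : (∫ t in (0:ℝ)..1, f t)
      = ∑ n ∈ Finset.range N, ∫ t in ((n:ℝ)*h)..(((n:ℝ)+1)*h), f t := by
    have hint' : ∀ k < N, IntervalIntegrable f volume
        ((fun n : ℕ => (n:ℝ)*h) k) ((fun n : ℕ => (n:ℝ)*h) (k+1)) := by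
      intro k hk
      have := hfint k hk
      simpa [Nat.cast_add_one] using this
    have hS := intervalIntegral.sum_integral_adjacent_intervals (μ := volume) (f := f) hint'
    simp only [Nat.cast_zero, zero_mul, hNh] at hS
    rw [← hS]
    apply Finset.sum_congr rfl
    intro k _
    congr 1
    push_cast
    ring
  set P : ℕ → Prop := fun n => (n:ℝ)*h < s ∧ s < ((n:ℝ)+1)*h with hP
  -- per-interval bound
  have hper : ∀ n ∈ Finset.range N,
      |(∫ t in ((n:ℝ)*h)..(((n:ℝ)+1)*h), f t)
          - (h/6) * (f ((n:ℝ)*h) + 4 * f ((n:ℝ)*h + h/2) + f (((n:ℝ)+1)*h))|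
        ≤ M*h^5/2880 + (if P n then K*h^3 else 0) := by
    intro n hnr
    rw [Finset.mem_range] at hnr
    have haD : (n:ℝ)*h ∈ Set.Icc (0:ℝ) 1 := hgrid n hnr.le
    have hbD : ((n:ℝ)+1)*h ∈ Set.Icc (0:ℝ) 1 := by
      have := hgrid (n+1) hnr
      push_cast at this
      exact this
    have hexp : ((n:ℝ)+1)*h = (n:ℝ)*h + h := by ring
    have hmidmem : (n:ℝ)*h + h/2 ∈ Set.Icc ((n:ℝ)*h) (((n:ℝ)+1)*h) :=
      ⟨by linarith, by rw [hexp]; linarith⟩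
    have hamem : (n:ℝ)*h ∈ Set.Icc ((n:ℝ)*h) (((n:ℝ)+1)*h) := ⟨le_rfl, hab n⟩
    have hbmem : ((n:ℝ)+1)*h ∈ Set.Icc ((n:ℝ)*h) (((n:ℝ)+1)*h) := ⟨hab n, le_rfl⟩
    have hmid : (((n:ℝ)*h) + (((n:ℝ)+1)*h))/2 = (n:ℝ)*h + h/2 := by ring
    have hba : ((n:ℝ)+1)*h - (n:ℝ)*h = h := by ring
    have hite : 0 ≤ (if P n then K*h^3 else 0) := by
      split_ifs
      · exact mul_nonneg hK0 (by positivity)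
      · exact le_rfl
    by_cases hc1 : ((n:ℝ)+1)*h ≤ s
    · -- entirely left of s
      have hfeq : EqOn f f₁ (Set.Icc ((n:ℝ)*h) (((n:ℝ)+1)*h)) :=
        fun t htm => hfle t (hsub n hnr htm) (le_trans htm.2 hc1)
      have hi : (∫ t in ((n:ℝ)*h)..(((n:ℝ)+1)*h), f t)
          = ∫ t in ((n:ℝ)*h)..(((n:ℝ)+1)*h), f₁ t :=
        intervalIntegral.integral_congr (by rwa [uIcc_of_le (hab n)])
      have herr := simpson_error f₁ hf₁ ((n:ℝ)*h) (((n:ℝ)+1)*h) haD hbD (hab n) M hM₁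
      rw [hmid, hba] at herr
      rw [hi, hfeq hamem, hfeq hmidmem, hfeq hbmem]
      refine le_trans (le_of_le_of_eq herr ?_) (le_add_of_nonneg_right hite)
      ring_nf
    · by_cases hc2 : s ≤ (n:ℝ)*h
      · -- entirely right of s
        have hfeq : EqOn f f₂ (Set.Icc ((n:ℝ)*h) (((n:ℝ)+1)*h)) :=
          fun t htm => hfeq₂ t (hsub n hnr htm) (le_trans hc2 htm.1)
        have hi : (∫ t in ((n:ℝ)*h)..(((n:ℝ)+1)*h), f t)
            = ∫ t in ((n:ℝ)*h)..(((n:ℝ)+1)*h), f₂ t :=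
          intervalIntegral.integral_congr (by rwa [uIcc_of_le (hab n)])
        have herr := simpson_error f₂ hf₂ ((n:ℝ)*h) (((n:ℝ)+1)*h) haD hbD (hab n) M hM₂
        rw [hmid, hba] at herr
        rw [hi, hfeq hamem, hfeq hmidmem, hfeq hbmem]
        refine le_trans (le_of_le_of_eq herr ?_) (le_add_of_nonneg_right hite)
        ring_nf
      · -- the interval containing s
        push_neg at hc1 hc2
        have hPn : P n := ⟨hc2, hc1⟩
        -- the jump part ψ = f₂ - f₁
        have hψcd : ContDiffOn ℝ 2 (f₂ - f₁) (Set.Icc (0:ℝ) 1) :=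
          ContDiffOn.of_le (hf₂.sub hf₁) (by norm_num)
        have hψs : (f₂ - f₁) s = 0 := by
          simp [Pi.sub_apply, hval]
        have hψ' : derivWithin (f₂ - f₁) (Set.Icc (0:ℝ) 1) s = 0 := by
          have hrw : (f₂ - f₁) = fun y => f₂ y - f₁ y := rfl
          rw [hrw, derivWithin_fun_sub
            ((hf₂.differentiableOn (by norm_num)) s hsD)
            ((hf₁.differentiableOn (by norm_num)) s hsD), ← hval', sub_self]
        have hψK : ∀ t ∈ Set.Icc (0:ℝ) 1,
            |iteratedDerivWithin 2 (f₂ - f₁) (Set.Icc (0:ℝ) 1) t| ≤ K := by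
          intro t htm
          rw [iteratedDerivWithin_sub htm uD
            (hf₂.of_le (by norm_num) t htm) (hf₁.of_le (by norm_num) t htm), abs_sub_comm]
          exact hK t htm
        have hq := quad_bound (f₂ - f₁) hψcd s hsD hψs hψ' K hψK
        -- pointwise bound on f - f₁ over the subinterval
        have dbound : ∀ t ∈ Set.Icc ((n:ℝ)*h) (((n:ℝ)+1)*h), |f t - f₁ t| ≤ K * h^2 / 2 := by
          intro t htm
          by_cases hts : t ≤ s
          · rw [hfle t (hsub n hnr htm) hts]
            simp only [sub_self, abs_zero]
            positivity
          · push_neg at hts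
            rw [hfgt t (hsub n hnr htm) hts]
            have hq' := hq t (hsub n hnr htm) hts.le
            have hts2 : (t - s)^2 ≤ h^2 := by
              apply sq_le_sq'
              · have := htm.1
                nlinarith [hts]
              · have := htm.2
                rw [hexp] at this
                nlinarith [hc2]
            have hmm := mul_le_mul_of_nonneg_left hts2 hK0
            have hqq : |(f₂ - f₁) t| = |f₂ t - f₁ t| := rfl
            rw [hqq] at hq'
            linarith
        have hda := dbound ((n:ℝ)*h) hamem
        have hdm := dbound ((n:ℝ)*h + h/2) hmidmem
        have hdb := dbound (((n:ℝ)+1)*h) hbmem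
        -- integrability pieces
        have hf1int : IntervalIntegrable f₁ volume ((n:ℝ)*h) (((n:ℝ)+1)*h) :=
          (hf1c.mono (hsub n hnr)).intervalIntegrable_of_Icc (hab n)
        have hdint : IntervalIntegrable (fun t => f t - f₁ t) volume ((n:ℝ)*h) (((n:ℝ)+1)*h) :=
          (hfint n hnr).sub hf1int
        have hsplit2 : (∫ t in ((n:ℝ)*h)..(((n:ℝ)+1)*h), f t)
            = (∫ t in ((n:ℝ)*h)..(((n:ℝ)+1)*h), f₁ t)
              + ∫ t in ((n:ℝ)*h)..(((n:ℝ)+1)*h), (f t - f₁ t) := by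
          rw [← intervalIntegral.integral_add hf1int hdint]
          apply intervalIntegral.integral_congr
          intro x _
          ring
        -- Simpson error for f₁
        have herr := simpson_error f₁ hf₁ ((n:ℝ)*h) (((n:ℝ)+1)*h) haD hbD (hab n) M hM₁
        rw [hmid, hba] at herr
        -- integral of the jump part
        have hZi : |∫ t in ((n:ℝ)*h)..(((n:ℝ)+1)*h), (f t - f₁ t)| ≤ K*h^3/2 := by
          have := intervalIntegral.norm_integral_le_of_norm_le_const
            (C := K*h^2/2) (f := fun t => f t - f₁ t)
            (a := (n:ℝ)*h) (b := ((n:ℝ)+1)*h) ?_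
          · rw [Real.norm_eq_abs] at this
            rw [hba, abs_of_nonneg hhpos.le] at this
            calc |∫ t in ((n:ℝ)*h)..(((n:ℝ)+1)*h), (f t - f₁ t)| ≤ K*h^2/2 * h := this
              _ = K*h^3/2 := by ring
          · intro x hx
            rw [Set.uIoc_of_le (hab n)] at hx
            exact dbound x (Ioc_subset_Icc_self hx)
        -- Simpson sum of the jump part
        have hZs : |(h/6) * ((f ((n:ℝ)*h) - f₁ ((n:ℝ)*h))
            + 4*(f ((n:ℝ)*h + h/2) - f₁ ((n:ℝ)*h + h/2))
            + (f (((n:ℝ)+1)*h) - f₁ (((n:ℝ)+1)*h)))| ≤ K*h^3/2 := by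
          rw [abs_mul, abs_of_nonneg (by linarith : (0:ℝ) ≤ h/6)]
          have t1 := abs_add_three (f ((n:ℝ)*h) - f₁ ((n:ℝ)*h))
            (4*(f ((n:ℝ)*h + h/2) - f₁ ((n:ℝ)*h + h/2)))
            (f (((n:ℝ)+1)*h) - f₁ (((n:ℝ)+1)*h))
          rw [abs_mul] at t1
          have h4 : |(4:ℝ)| = 4 := by norm_num
          rw [h4] at t1
          have hbr : |f ((n:ℝ)*h) - f₁ ((n:ℝ)*h)
              + 4*(f ((n:ℝ)*h + h/2) - f₁ ((n:ℝ)*h + h/2))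
              + (f (((n:ℝ)+1)*h) - f₁ (((n:ℝ)+1)*h))| ≤ 3*(K*h^2) := by linarith
          calc h/6 * |f ((n:ℝ)*h) - f₁ ((n:ℝ)*h)
              + 4*(f ((n:ℝ)*h + h/2) - f₁ ((n:ℝ)*h + h/2))
              + (f (((n:ℝ)+1)*h) - f₁ (((n:ℝ)+1)*h))|
              ≤ h/6 * (3*(K*h^2)) := by
                apply mul_le_mul_of_nonneg_left hbr (by linarith)
            _ = K*h^3/2 := by ring
        -- combine
        have hkey : (∫ t in ((n:ℝ)*h)..(((n:ℝ)+1)*h), f t)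
            - (h/6) * (f ((n:ℝ)*h) + 4 * f ((n:ℝ)*h + h/2) + f (((n:ℝ)+1)*h))
            = ((∫ t in ((n:ℝ)*h)..(((n:ℝ)+1)*h), f₁ t)
                - (h/6) * (f₁ ((n:ℝ)*h) + 4 * f₁ ((n:ℝ)*h + h/2) + f₁ (((n:ℝ)+1)*h)))
              + (∫ t in ((n:ℝ)*h)..(((n:ℝ)+1)*h), (f t - f₁ t))
              - ((h/6) * ((f ((n:ℝ)*h) - f₁ ((n:ℝ)*h))
                + 4*(f ((n:ℝ)*h + h/2) - f₁ ((n:ℝ)*h + h/2))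
                + (f (((n:ℝ)+1)*h) - f₁ (((n:ℝ)+1)*h)))) := by
          rw [hsplit2]
          ring
        rw [hkey, if_pos hPn]
        have tri : ∀ A B C : ℝ, |A + B - C| ≤ |A| + |B| + |C| := by
          intro A B C
          rw [sub_eq_add_neg]
          refine (abs_add_le _ _).trans ?_
          rw [abs_neg]
          linarith [abs_add_le A B]
        refine le_trans (tri _ _ _) ?_
        linarith [herr, hZi, hZs]
  -- summation
  rw [hsplit, ← Finset.sum_sub_distrib]
  have hcard : (Finset.filter P (Finset.range N)).card ≤ 1 := by
    rw [Finset.card_le_one]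
    intro i hi j hj
    simp only [Finset.mem_filter, hP] at hi hj
    obtain ⟨-, hi1, hi2⟩ := hi
    obtain ⟨-, hj1, hj2⟩ := hj
    have h1 : (i:ℝ) < (j:ℝ) + 1 := by nlinarith [lt_trans hi1 hj2]
    have h2 : (j:ℝ) < (i:ℝ) + 1 := by nlinarith [lt_trans hj1 hi2]
    have h1' : i < j + 1 := by exact_mod_cast h1
    have h2' : j < i + 1 := by exact_mod_cast h2
    omega
  have hsum : (∑ n ∈ Finset.range N, if P n then K*h^3 else 0) ≤ K*h^3 := by
    rw [← Finset.sum_filter, Finset.sum_const, nsmul_eq_mul]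
    have hcr : ((Finset.filter P (Finset.range N)).card : ℝ) ≤ 1 := by exact_mod_cast hcard
    calc ((Finset.filter P (Finset.range N)).card : ℝ) * (K*h^3)
        ≤ 1 * (K*h^3) := by
          apply mul_le_mul_of_nonneg_right hcr (mul_nonneg hK0 (by positivity))
      _ = K*h^3 := one_mul _
  calc |∑ n ∈ Finset.range N, ((∫ t in ((n:ℝ)*h)..(((n:ℝ)+1)*h), f t)
          - (h/6) * (f ((n:ℝ)*h) + 4 * f ((n:ℝ)*h + h/2) + f (((n:ℝ)+1)*h)))|
      ≤ ∑ n ∈ Finset.range N, |(∫ t in ((n:ℝ)*h)..(((n:ℝ)+1)*h), f t)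
          - (h/6) * (f ((n:ℝ)*h) + 4 * f ((n:ℝ)*h + h/2) + f (((n:ℝ)+1)*h))| :=
        Finset.abs_sum_le_sum_abs _ _
    _ ≤ ∑ n ∈ Finset.range N, (M*h^5/2880 + if P n then K*h^3 else 0) :=
        Finset.sum_le_sum hper
    _ = N * (M*h^5/2880) + ∑ n ∈ Finset.range N, (if P n then K*h^3 else 0) := by
        rw [Finset.sum_add_distrib, Finset.sum_const, Finset.card_range, nsmul_eq_mul]
    _ ≤ N * (M*h^5/2880) + K*h^3 := by linarith
    _ = M * h^4 / 2880 + K * h^3 := by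
        have : (N:ℝ) * (M*h^5/2880) = ((N:ℝ)*h) * (M*h^4) / 2880 := by ring
        rw [this, hNh]
        ring
end

section
/- Let Ω ⊆ ℝ³ be open, let B : Ω → ℝ³ be continuously differentiable with B(x) ≠ 0 for all x ∈ Ω, let b = B/‖B‖ be the unit field, and let ω_c ≠ 0 be a real constant. Let I be an open real interval and let p, ξ : I → ℝ and X : I → Ω be differentiable functions such that for all t ∈ I, with γ = √(1 + p(t)²), B* = B(X(t)) − ξ(t)·p(t)·(∇×b)(X(t)), and B*∥ = ⟨B*, b(X(t))⟩ assumed nonzero, the guiding center equations hold: p′(t) = 0; ξ′(t) = −p(t)(1 − ξ(t)²) / (2γ·B*∥) · ⟨B*, ∇(ln‖B‖)(X(t))⟩; and X′(t) = (ξ(t)·p(t)/γ)·B*/B*∥ − (1/ω_c)·(p(t)²(1 − ξ(t)²)/(2γ·B*∥))·(b(X(t)) × ∇(ln‖B‖)(X(t))). Then the magnetic moment μ(t) = (1 − ξ(t)²)·p(t)² / ‖B(X(t))‖ is constant on I. -/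
open RealInnerProductSpace

/-- Componentwise partial derivative of a scalar function on ℝ³ in the i-th
coordinate direction. -/
noncomputable def partialDeriv3 (F : EuclideanSpace ℝ (Fin 3) → ℝ) (i : Fin 3)
    (x : EuclideanSpace ℝ (Fin 3)) : ℝ :=
  fderiv ℝ F x (EuclideanSpace.single i 1)

/-- Curl of a vector field on ℝ³, taken componentwise via partial derivatives. -/
noncomputable def curl3 (F : EuclideanSpace ℝ (Fin 3) → EuclideanSpace ℝ (Fin 3))
    (x : EuclideanSpace ℝ (Fin 3)) : EuclideanSpace ℝ (Fin 3) :=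
  (WithLp.equiv 2 (Fin 3 → ℝ)).symm
    ![partialDeriv3 (fun y => F y 2) 1 x - partialDeriv3 (fun y => F y 1) 2 x,
      partialDeriv3 (fun y => F y 0) 2 x - partialDeriv3 (fun y => F y 2) 0 x,
      partialDeriv3 (fun y => F y 1) 0 x - partialDeriv3 (fun y => F y 0) 1 x]

/-- Cross product in ℝ³. -/
noncomputable def cross3 (u v : EuclideanSpace ℝ (Fin 3)) : EuclideanSpace ℝ (Fin 3) :=
  (WithLp.equiv 2 (Fin 3 → ℝ)).symm
    (crossProduct (WithLp.equiv 2 (Fin 3 → ℝ) u) (WithLp.equiv 2 (Fin 3 → ℝ) v))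

lemma inner_cross3_self (u v : EuclideanSpace ℝ (Fin 3)) : ⟪v, cross3 u v⟫ = 0 := by
  simp only [cross3, cross_apply, PiLp.inner_apply, Fin.sum_univ_three,
    RCLike.inner_apply, WithLp.equiv_symm_apply, WithLp.ofLp_toLp, WithLp.equiv_apply,
    Matrix.cons_val_zero, Matrix.cons_val_one, Matrix.head_cons, Matrix.cons_val_two,
    Matrix.tail_cons, conj_trivial]
  ring

/-- Exact conservation of the magnetic moment
μ = (1 − ξ²)p²/‖B(X)‖ along solutions of the relativistic guiding center
equations (no collisions, radiation or electric field). -/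
theorem guiding_center_magnetic_moment_conserved
    (Ω : Set (EuclideanSpace ℝ (Fin 3))) (hΩ : IsOpen Ω)
    (B : EuclideanSpace ℝ (Fin 3) → EuclideanSpace ℝ (Fin 3))
    (hB : ContDiffOn ℝ 1 B Ω)
    (hBne : ∀ x ∈ Ω, B x ≠ 0)
    (b : EuclideanSpace ℝ (Fin 3) → EuclideanSpace ℝ (Fin 3))
    (hb : ∀ x, b x = ‖B x‖⁻¹ • B x)
    (ωc : ℝ) (hωc : ωc ≠ 0)
    (t₀ t₁ : ℝ) (I : Set ℝ) (hI : I = Set.Ioo t₀ t₁)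
    (p ξ : ℝ → ℝ) (X : ℝ → EuclideanSpace ℝ (Fin 3))
    (hXΩ : ∀ t ∈ I, X t ∈ Ω)
    (γ : ℝ → ℝ) (hγ : ∀ t, γ t = Real.sqrt (1 + p t ^ 2))
    (Bstar : ℝ → EuclideanSpace ℝ (Fin 3))
    (hBstar : ∀ t, Bstar t = B (X t) - (ξ t * p t) • curl3 b (X t))
    (Bspar : ℝ → ℝ)
    (hBspar : ∀ t, Bspar t = ⟪Bstar t, b (X t)⟫)
    (hBsparne : ∀ t ∈ I, Bspar t ≠ 0)
    (hp : ∀ t ∈ I, HasDerivAt p 0 t)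
    (hξ : ∀ t ∈ I, HasDerivAt ξ
      (-(p t * (1 - ξ t ^ 2)) / (2 * γ t * Bspar t) *
        ⟪Bstar t, gradient (fun y => Real.log ‖B y‖) (X t)⟫) t)
    (hX : ∀ t ∈ I, HasDerivAt X
      ((ξ t * p t / γ t / Bspar t) • Bstar t
        - ((1 / ωc) * (p t ^ 2 * (1 - ξ t ^ 2) / (2 * γ t * Bspar t))) •
            cross3 (b (X t)) (gradient (fun y => Real.log ‖B y‖) (X t))) t) :
    ∀ t ∈ I, ∀ t' ∈ I,
      (1 - ξ t ^ 2) * p t ^ 2 / ‖B (X t)‖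
        = (1 - ξ t' ^ 2) * p t' ^ 2 / ‖B (X t')‖ := by
  classical
  set L : EuclideanSpace ℝ (Fin 3) → ℝ := fun y => Real.log ‖B y‖ with hLdef
  set h : ℝ → ℝ := fun s => (1 - ξ s ^ 2) * p s ^ 2 * Real.exp (-(L (X s))) with hhdef
  have hIopen : IsOpen I := hI ▸ isOpen_Ioo
  have hIconv : Convex ℝ I := hI ▸ convex_Ioo t₀ t₁
  have key : ∀ s ∈ I, HasDerivAt h 0 s := by
    intro s hs
    have hXs : X s ∈ Ω := hXΩ s hs
    have hBd : DifferentiableAt ℝ B (X s) :=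
      (hB.differentiableOn one_ne_zero).differentiableAt (hΩ.mem_nhds hXs)
    have hBnz : B (X s) ≠ 0 := hBne _ hXs
    have hnormpos : (0:ℝ) < ‖B (X s)‖ := norm_pos_iff.mpr hBnz
    have hLd : DifferentiableAt ℝ L (X s) := by
      have h1 : DifferentiableAt ℝ (fun y => ‖B y‖) (X s) := hBd.norm (𝕜 := ℝ) hBnz
      exact DifferentiableAt.comp (g := Real.log) (f := fun y => ‖B y‖) (X s)
        (Real.differentiableAt_log hnormpos.ne') h1
    have hγne : γ s ≠ 0 := by
      rw [hγ]
      exact (Real.sqrt_pos.mpr (by positivity)).ne'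
    have hBsne : Bspar s ≠ 0 := hBsparne s hs
    set g : EuclideanSpace ℝ (Fin 3) := gradient L (X s) with hgdef
    set d : ℝ := ⟪Bstar s, g⟫ with hddef
    have hfd : HasFDerivAt L (InnerProductSpace.toDual ℝ _ g) (X s) :=
      hLd.hasGradientAt.hasFDerivAt
    have hchain : HasDerivAt (fun u => L (X u))
        ((ξ s * p s / γ s / Bspar s) * d) s := by
      have := hfd.comp_hasDerivAt s (hX s hs)
      have heq : (InnerProductSpace.toDual ℝ _ g)
          ((ξ s * p s / γ s / Bspar s) • Bstar s
            - ((1 / ωc) * (p s ^ 2 * (1 - ξ s ^ 2) / (2 * γ s * Bspar s))) •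
                cross3 (b (X s)) g)
          = (ξ s * p s / γ s / Bspar s) * d := by
        rw [InnerProductSpace.toDual_apply_apply, inner_sub_right, inner_smul_right,
          inner_smul_right, inner_cross3_self, real_inner_comm]
        ring
      rw [heq] at this
      exact this
    have hE : HasDerivAt (fun u => Real.exp (-(L (X u))))
        (Real.exp (-(L (X s))) * (-((ξ s * p s / γ s / Bspar s) * d))) s :=
      by
        have := (Real.hasDerivAt_exp (-(L (X s)))).comp s hchain.neg
        exact this
    have hA : HasDerivAt (fun u => (1 - ξ u ^ 2) * p u ^ 2)
        ((0 - 2 * ξ s ^ 1 * (-(p s * (1 - ξ s ^ 2)) / (2 * γ s * Bspar s) * d)) * p s ^ 2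
          + (1 - ξ s ^ 2) * (2 * p s ^ 1 * 0)) s := by
      exact ((hasDerivAt_const s (1:ℝ)).sub ((hξ s hs).pow 2)).mul ((hp s hs).pow 2)
    have := hA.mul hE
    refine HasDerivAt.congr_deriv this ?_
    have hEpos : Real.exp (-(L (X s))) ≠ 0 := Real.exp_ne_zero _
    ring
  have hfderiv : ∀ s ∈ I, fderivWithin ℝ h I s = 0 := by
    intro s hs
    rw [fderivWithin_of_isOpen hIopen hs, (key s hs).hasFDerivAt.fderiv]
    ext u
    simp
  have hdiff : DifferentiableOn ℝ h I := fun s hs =>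
    ((key s hs).differentiableAt).differentiableWithinAt
  intro t ht t' ht'
  have hconst : h t = h t' :=
    hIconv.is_const_of_fderivWithin_eq_zero hdiff hfderiv ht ht'
  have hval : ∀ s ∈ I, (1 - ξ s ^ 2) * p s ^ 2 / ‖B (X s)‖ = h s := by
    intro s hs
    have hnormpos : (0:ℝ) < ‖B (X s)‖ := norm_pos_iff.mpr (hBne _ (hXΩ s hs))
    simp only [hhdef, hLdef, Real.exp_neg, Real.exp_log hnormpos]
    rw [div_eq_mul_inv]
  rw [hval t ht, hval t' ht', hconst]
end
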